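/- arXiv:1305.3324 — 6 statements merged into one kernel-verified Lean document; each statement's English description precedes it below -/
import Mathlib

section
/- Let A be a commutative semisimple complex Banach algebra with unit and let x ∈ A have finite spectrum σ(x) = {λ₁, λ₂, …, λₙ} with the λᵢ pairwise distinct; put δ = min_{i≠j} |λᵢ − λⱼ|. Then there exist orthogonal idempotents x₁, …, xₙ ∈ A (i.e. xᵢ² = xᵢ and xᵢxⱼ = 0 for i ≠ j) such that x = λ₁x₁ + λ₂x₂ + … + λₙxₙ, and moreover ‖xᵢ‖ ≤ δ^{−n+1} 2^{n−1} ‖x‖^{n−1} for each i = 1, …, n. -/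
open WeakDual Finset

/-- **Proposition 10.** Let `A` be a commutative semisimple complex Banach algebra with unit and
let `x ∈ A` have finite spectrum `σ(x) = {λ₁, …, λₙ}` (the `λᵢ` pairwise distinct); put
`δ = min_{i ≠ j} |λᵢ − λⱼ|`. Then there exist orthogonal idempotents `x₁, …, xₙ ∈ A` with
`x = λ₁x₁ + … + λₙxₙ` and `‖xᵢ‖ ≤ δ^{-n+1} 2^{n-1} ‖x‖^{n-1}` for each `i`. -/
theorem exists_orthogonal_idempotents_of_finite_spectrum
    (A : Type*) [NormedCommRing A] [NormOneClass A] [NormedAlgebra ℂ A] [CompleteSpace A]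
    (hsemisimple : (⊥ : Ideal A).jacobson = ⊥)
    (x : A) (n : ℕ) (lam : Fin n → ℂ) (hinj : Function.Injective lam)
    (hspec : spectrum ℂ x = Set.range lam)
    (δ : ℝ) (hδ : δ = sInf {d : ℝ | ∃ i j, i ≠ j ∧ d = dist (lam i) (lam j)}) :
    ∃ e : Fin n → A,
      (∀ i, e i * e i = e i) ∧
      (∀ i j, i ≠ j → e i * e j = 0) ∧
      x = ∑ i, lam i • e i ∧
      ∀ i, ‖e i‖ ≤ δ⁻¹ ^ (n - 1) * 2 ^ (n - 1) * ‖x‖ ^ (n - 1) := by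
  -- Semisimplicity: an element killed by all characters is zero.
  have hzero : ∀ a : A, (∀ φ : characterSpace ℂ A, φ a = 0) → a = 0 := by
    intro a ha
    have hmem : a ∈ (⊥ : Ideal A).jacobson := by
      rw [Ideal.mem_jacobson_bot]
      intro y
      rw [← spectrum.zero_notMem_iff ℂ]
      intro h0
      rw [WeakDual.CharacterSpace.mem_spectrum_iff_exists] at h0
      obtain ⟨φ, hφ⟩ := h0
      simp [ha φ] at hφ
    simpa [hsemisimple] using hmem
  -- Every character sends `x` to some `lam k`.
  have hx : ∀ φ : characterSpace ℂ A, ∃ k, lam k = φ x := by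
    intro φ
    have : φ x ∈ spectrum ℂ x := WeakDual.CharacterSpace.apply_mem_spectrum φ x
    rw [hspec] at this
    exact this
  -- The Lagrange idempotents.
  set e : Fin n → A :=
    fun i => ∏ j ∈ univ.erase i, (lam i - lam j)⁻¹ • (x - algebraMap ℂ A (lam j)) with he
  -- Value of characters on `e i`.
  have key : ∀ (φ : characterSpace ℂ A) (i k : Fin n), lam k = φ x →
      φ (e i) = if k = i then 1 else 0 := by
    intro φ i k hk
    have : φ (e i) = ∏ j ∈ univ.erase i, (lam i - lam j)⁻¹ * (lam k - lam j) := by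
      rw [he]
      rw [map_prod]
      refine Finset.prod_congr rfl fun j hj => ?_
      rw [map_smul, map_sub, AlgHomClass.commutes, smul_eq_mul, ← hk]
      simp
    rw [this]
    by_cases hki : k = i
    · subst hki
      rw [if_pos rfl]
      refine Finset.prod_eq_one fun j hj => ?_
      have hji : j ≠ k := (Finset.mem_erase.mp hj).1
      exact inv_mul_cancel₀ (sub_ne_zero.mpr fun h => hji (hinj h).symm)
    · rw [if_neg hki]
      refine Finset.prod_eq_zero (Finset.mem_erase.mpr ⟨hki, Finset.mem_univ k⟩) ?_
      simp
  refine ⟨e, ?_, ?_, ?_, ?_⟩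
  · -- idempotency
    intro i
    have := hzero (e i * e i - e i) fun φ => by
      obtain ⟨k, hk⟩ := hx φ
      rw [map_sub, map_mul, key φ i k hk]
      by_cases hki : k = i <;> simp [hki]
    linear_combination this
  · -- orthogonality
    intro i j hij
    have := hzero (e i * e j) fun φ => by
      obtain ⟨k, hk⟩ := hx φ
      rw [map_mul, key φ i k hk, key φ j k hk]
      by_cases hki : k = i
      · subst hki; simp [hij]
      · simp [hki]
    linear_combination this
  · -- the spectral decomposition
    have := hzero (x - ∑ i, lam i • e i) fun φ => by
      obtain ⟨k, hk⟩ := hx φ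
      rw [map_sub, map_sum]
      have : ∀ i ∈ Finset.univ, φ (lam i • e i) = if k = i then lam i else 0 := by
        intro i _
        rw [map_smul, key φ i k hk, smul_eq_mul]
        by_cases hki : k = i <;> simp [hki]
      rw [Finset.sum_congr rfl this, Finset.sum_ite_eq, if_pos (Finset.mem_univ k), ← hk,
        sub_self]
    linear_combination this
  · -- the norm bound
    intro i
    have hcard : (univ.erase i).card = n - 1 := by
      rw [Finset.card_erase_of_mem (Finset.mem_univ i), Finset.card_univ, Fintype.card_fin]
    have hfac : ∀ j ∈ univ.erase i,
        ‖(lam i - lam j)⁻¹ • (x - algebraMap ℂ A (lam j))‖ ≤ δ⁻¹ * (2 * ‖x‖) := by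
      intro j hj
      have hji : j ≠ i := (Finset.mem_erase.mp hj).1
      -- δ is positive and is a lower bound for the distances
      set S : Set ℝ := {d : ℝ | ∃ i j, i ≠ j ∧ d = dist (lam i) (lam j)} with hS
      have hSfin : S.Finite := by
        refine Set.Finite.subset
          (Set.finite_range fun p : Fin n × Fin n => dist (lam p.1) (lam p.2)) ?_
        rintro d ⟨a, b, -, rfl⟩
        exact ⟨(a, b), rfl⟩
      have hSne : S.Nonempty := ⟨dist (lam i) (lam j), i, j, fun h => hji h.symm, rfl⟩
      have hδpos : 0 < δ := by
        rw [hδ]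
        obtain ⟨a, b, hab, hd⟩ := hSne.csInf_mem hSfin
        rw [hd]
        exact dist_pos.mpr fun h => hab (hinj h)
      have hδle : δ ≤ dist (lam i) (lam j) := by
        rw [hδ]
        exact csInf_le hSfin.bddBelow ⟨i, j, fun h => hji h.symm, rfl⟩
      have h1 : ‖(lam i - lam j)⁻¹‖ ≤ δ⁻¹ := by
        rw [norm_inv]
        have : ‖lam i - lam j‖ = dist (lam i) (lam j) := by rw [dist_eq_norm]
        rw [this]
        exact inv_anti₀ hδpos hδle
      have h2 : ‖x - algebraMap ℂ A (lam j)‖ ≤ 2 * ‖x‖ := by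
        have hj' : ‖lam j‖ ≤ ‖x‖ := by
          refine spectrum.norm_le_norm_of_mem (a := x) (k := lam j) ?_
          rw [hspec]; exact ⟨j, rfl⟩
        calc ‖x - algebraMap ℂ A (lam j)‖ ≤ ‖x‖ + ‖algebraMap ℂ A (lam j)‖ := norm_sub_le _ _
          _ = ‖x‖ + ‖lam j‖ := by rw [norm_algebraMap']
          _ ≤ ‖x‖ + ‖x‖ := by linarith
          _ = 2 * ‖x‖ := by ring
      rw [norm_smul]
      exact mul_le_mul h1 h2 (norm_nonneg _) (inv_nonneg.mpr hδpos.le)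
    calc ‖e i‖ ≤ ∏ j ∈ univ.erase i, ‖(lam i - lam j)⁻¹ • (x - algebraMap ℂ A (lam j))‖ := by
          rw [he]; exact Finset.norm_prod_le _ _
      _ ≤ ∏ _j ∈ univ.erase i, (δ⁻¹ * (2 * ‖x‖)) :=
          Finset.prod_le_prod (fun j _ => norm_nonneg _) hfac
      _ = (δ⁻¹ * (2 * ‖x‖)) ^ (n - 1) := by rw [Finset.prod_const, hcard]
      _ = δ⁻¹ ^ (n - 1) * 2 ^ (n - 1) * ‖x‖ ^ (n - 1) := by ring
end

section
/- Let f be a trigonometric polynomial on 𝕋 whose set of Fourier coefficient values is {f̂(n) : n ∈ ℤ} = {0, λ₁, λ₂, …, λ_k} with 0, λ₁, …, λ_k pairwise distinct. Put λ₀ = 0, δ = min_{0 ≤ i < j ≤ k} |λᵢ − λⱼ|, and λ_max = max_{0 ≤ i ≤ k} |λᵢ|. Then for every m ∈ ℕ the m-th convolution power of f satisfies ‖f^{*m}‖_{L¹(𝕋)} ≤ k δ^{−k} 2^{k} ‖f‖_{L¹(𝕋)}^{k} λ_max^{m}. -/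
open MeasureTheory Filter Complex Set AddCircle
open scoped Pointwise Classical Real

noncomputable section

instance fact_two_pi_pos : Fact (0 < 2 * Real.pi) := ⟨by positivity⟩

/-- The circle group `𝕋 = ℝ/2πℤ`. -/
abbrev Circ := AddCircle (2 * Real.pi)

/-- The trigonometric polynomial with finitely supported Fourier coefficients `c`. -/
def trig (c : ℤ →₀ ℂ) : C(Circ, ℂ) := ∑ n ∈ c.support, c n • fourier n

/-- The `L¹(𝕋)` norm of the trigonometric polynomial with coefficients `c`
(with respect to the normalized Haar measure on `𝕋`). -/
def trigL1 (c : ℤ →₀ ℂ) : ℝ := ∫ x, ‖trig c x‖ ∂(haarAddCircle : Measure Circ)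

/-- The `m`-th convolution power (`m ≥ 1`) of the trigonometric polynomial with coefficients
`c` is the trigonometric polynomial with Fourier coefficients `(c n)^m`. -/
def trigPow (c : ℤ →₀ ℂ) (m : ℕ) : C(Circ, ℂ) := ∑ n ∈ c.support, (c n ^ m) • fourier n

/-- The `L¹(𝕋)` norm of the `m`-th convolution power of the trigonometric polynomial `c`. -/
def trigPowL1 (c : ℤ →₀ ℂ) (m : ℕ) : ℝ :=
  ∫ x, ‖trigPow c m x‖ ∂(haarAddCircle : Measure Circ)

/- Auxiliary lemmas -/

lemma fourier_int (n : ℤ) :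
    ∫ x, (fourier n x : ℂ) ∂(haarAddCircle : Measure Circ) = if n = 0 then 1 else 0 := by
  rcases eq_or_ne n 0 with h | h
  · simp [h, fourier_zero, measure_univ]
  · simp only [h, if_false]
    set I := ∫ x, (fourier n x : ℂ) ∂(haarAddCircle : Measure Circ) with hI
    set a : Circ := ((Real.pi / n : ℝ) : Circ) with ha
    have h1 : ∫ x, (fourier n (x + a) : ℂ) ∂(haarAddCircle : Measure Circ) = I :=
      integral_add_right_eq_self (fun x => (fourier n x : ℂ)) a
    have h2 : ∀ x : Circ, (fourier n (x + a) : ℂ) = fourier n x * fourier n a := by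
      intro x; simp [fourier_apply, zsmul_add, toCircle_add]
    have h3 : (fourier n a : ℂ) = -1 := by
      rw [ha, fourier_coe_apply]
      have : 2 * (Real.pi:ℂ) * Complex.I * n * (Real.pi / n : ℝ) / (2 * Real.pi : ℝ)
          = Real.pi * Complex.I := by
        push_cast
        have hn : (n:ℂ) ≠ 0 := Int.cast_ne_zero.mpr h
        have hpi : (Real.pi:ℂ) ≠ 0 := by exact_mod_cast Real.pi_ne_zero
        field_simp
      rw [this]
      simpa using Complex.exp_pi_mul_I
    simp_rw [h2, h3, mul_neg_one] at h1
    rw [integral_neg] at h1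
    rw [← hI] at h1
    have h4 : I + I = 0 := by linear_combination -h1
    have h2I : (2:ℂ) * I = 0 := by ring_nf; linear_combination h4
    simpa using mul_eq_zero.mp h2I

lemma cont_trig (s : Finset ℤ) (a : ℤ → ℂ) :
    Continuous fun y : Circ => ∑ n ∈ s, a n * fourier n y :=
  continuous_finset_sum _ fun n _ => continuous_const.mul (map_continuous (fourier n))

lemma conv_pointwise (s : Finset ℤ) (a b : ℤ → ℂ) (x : Circ) :
    (∫ y, (∑ n ∈ s, a n * fourier n y) * (∑ n ∈ s, b n * fourier n (x - y))
      ∂(haarAddCircle : Measure Circ)) = ∑ n ∈ s, (a n * b n) * fourier n x := by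
  have key : ∀ y : Circ, (∑ n ∈ s, a n * fourier n y) * (∑ n ∈ s, b n * fourier n (x - y))
      = ∑ n ∈ s, ∑ m ∈ s, (a n * b m * fourier m x) * fourier (n - m) y := by
    intro y
    rw [Finset.sum_mul_sum]
    refine Finset.sum_congr rfl fun n _ => Finset.sum_congr rfl fun m _ => ?_
    have h1 : (fourier m (x - y) : ℂ) = fourier m x * fourier (-m) y := by
      simp [fourier_apply, sub_eq_add_neg, smul_add, toCircle_add, smul_neg, neg_smul]
    have h2 : (fourier n y : ℂ) * fourier (-m) y = fourier (n - m) y := by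
      rw [← fourier_add]; norm_num [sub_eq_add_neg]
    rw [h1, ← h2]; ring
  simp_rw [key]
  rw [integral_finset_sum]
  · refine Finset.sum_congr rfl fun n hn => ?_
    rw [integral_finset_sum]
    · have hterm : ∀ m ∈ s, (∫ y, (a n * b m * fourier m x) * fourier (n - m) y
          ∂(haarAddCircle : Measure Circ))
          = (a n * b m * fourier m x) * if n - m = 0 then 1 else 0 := fun m _ => by
        rw [MeasureTheory.integral_const_mul, fourier_int]
      rw [Finset.sum_congr rfl hterm]
      simp only [sub_eq_zero, mul_ite, mul_one, mul_zero]
      simp [Finset.sum_ite_eq', hn, mul_comm, mul_assoc, mul_left_comm]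
    · intro m _
      exact ((continuous_const.mul
        (map_continuous (fourier (n-m)))).integrable_of_hasCompactSupport
        (HasCompactSupport.of_compactSpace _))
  · intro n _
    exact ((continuous_finset_sum _ fun m _ => continuous_const.mul
      (map_continuous (fourier (n-m)))).integrable_of_hasCompactSupport
      (HasCompactSupport.of_compactSpace _))

lemma L1_mul_le (s : Finset ℤ) (a b : ℤ → ℂ) :
    (∫ x, ‖∑ n ∈ s, (a n * b n) * fourier n x‖ ∂(haarAddCircle : Measure Circ))
      ≤ (∫ x, ‖∑ n ∈ s, a n * fourier n x‖ ∂(haarAddCircle : Measure Circ)) *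
        (∫ x, ‖∑ n ∈ s, b n * fourier n x‖ ∂(haarAddCircle : Measure Circ)) := by
  set μ : Measure Circ := haarAddCircle with hμ
  have hFc : Continuous fun y : Circ => ∑ n ∈ s, a n * fourier n y := cont_trig s a
  have hGc : Continuous fun y : Circ => ∑ n ∈ s, b n * fourier n y := cont_trig s b
  set F : Circ → ℂ := fun y => ∑ n ∈ s, a n * fourier n y with hF
  set G : Circ → ℂ := fun y => ∑ n ∈ s, b n * fourier n y with hG
  have hP : Continuous fun p : Circ × Circ => ‖F p.2‖ * ‖G (p.1 - p.2)‖ :=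
    ((hFc.comp continuous_snd).norm).mul ((hGc.comp (continuous_fst.sub continuous_snd)).norm)
  have hPint : Integrable (fun p : Circ × Circ => ‖F p.2‖ * ‖G (p.1 - p.2)‖) (μ.prod μ) :=
    hP.integrable_of_hasCompactSupport (HasCompactSupport.of_compactSpace _)
  have step1 : ∀ x : Circ, ‖∑ n ∈ s, (a n * b n) * fourier n x‖
      ≤ ∫ y, ‖F y‖ * ‖G (x - y)‖ ∂μ := by
    intro x
    rw [← conv_pointwise s a b x]
    refine (norm_integral_le_integral_norm _).trans (le_of_eq ?_)
    simp only [norm_mul]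
    rfl
  have int1 : Integrable (fun x => ‖∑ n ∈ s, (a n * b n) * fourier n x‖) μ :=
    ((cont_trig s fun n => a n * b n).norm).integrable_of_hasCompactSupport
      (HasCompactSupport.of_compactSpace _)
  have int2 : Integrable (fun x => ∫ y, ‖F y‖ * ‖G (x - y)‖ ∂μ) μ := hPint.integral_prod_left
  calc (∫ x, ‖∑ n ∈ s, (a n * b n) * fourier n x‖ ∂μ)
      ≤ ∫ x, ∫ y, ‖F y‖ * ‖G (x - y)‖ ∂μ ∂μ := integral_mono int1 int2 step1
    _ = ∫ y, ∫ x, ‖F y‖ * ‖G (x - y)‖ ∂μ ∂μ := integral_integral_swap hPint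
    _ = ∫ y, ‖F y‖ * ∫ x, ‖G (x - y)‖ ∂μ ∂μ := by
          simp_rw [MeasureTheory.integral_const_mul]
    _ = ∫ y, ‖F y‖ * ∫ x, ‖G x‖ ∂μ ∂μ := by
          simp_rw [integral_sub_right_eq_self (fun x => ‖G x‖)]
    _ = (∫ y, ‖F y‖ ∂μ) * ∫ x, ‖G x‖ ∂μ := by
          rw [MeasureTheory.integral_mul_const]

lemma trigPow_apply (c : ℤ →₀ ℂ) (r : ℕ) (x : Circ) :
    trigPow c r x = ∑ n ∈ c.support, (c n ^ r) * fourier n x := by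
  simp [trigPow, ContinuousMap.coe_sum, Finset.sum_apply, smul_eq_mul]

lemma trig_apply (c : ℤ →₀ ℂ) (x : Circ) :
    trig c x = ∑ n ∈ c.support, (c n : ℂ) * fourier n x := by
  simp [trig, ContinuousMap.coe_sum, Finset.sum_apply, smul_eq_mul]

set_option maxHeartbeats 2000000 in
/-- **Lemma 11.** Let `f` be a trigonometric polynomial whose set of Fourier coefficient values
is `{0, λ₁, …, λ_k}` (pairwise distinct, `λ₀ = 0`), let `δ = min_{i ≠ j} |λᵢ − λⱼ|` and
`λ_max = max |λᵢ|`. Then for every `m ≥ 1`,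
`‖f^{*m}‖_{L¹} ≤ k δ^{-k} 2^k ‖f‖_{L¹}^k λ_max^m`. -/
theorem conv_power_l1_bound (c : ℤ →₀ ℂ) (k : ℕ) (Λ : Fin (k + 1) → ℂ)
    (hΛ0 : Λ 0 = 0) (hinj : Function.Injective Λ)
    (hran : Set.range ⇑c = Set.range Λ)
    (δ lmax : ℝ)
    (hδ : IsLeast {d : ℝ | ∃ i j, i ≠ j ∧ d = dist (Λ i) (Λ j)} δ)
    (hmax : IsGreatest (Set.range fun i => ‖Λ i‖) lmax)
    (m : ℕ) (hm : 1 ≤ m) :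
    trigPowL1 c m ≤ (k : ℝ) * δ⁻¹ ^ k * 2 ^ k * trigL1 c ^ k * lmax ^ m := by
  classical
  set μ : Measure Circ := haarAddCircle with hμ
  set s : Finset ℤ := c.support with hs
  set A : ℕ → ℝ := fun r => ∫ x, ‖∑ n ∈ s, (c n ^ r) * fourier n x‖ ∂μ with hA
  have hInt : ∀ f : Circ → ℝ, Continuous f → Integrable f μ := fun f hf =>
    hf.integrable_of_hasCompactSupport (HasCompactSupport.of_compactSpace f)
  have hIntC : ∀ f : Circ → ℂ, Continuous f → Integrable f μ := fun f hf =>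
    hf.integrable_of_hasCompactSupport (HasCompactSupport.of_compactSpace f)
  have hAeq : ∀ r, trigPowL1 c r = A r := by
    intro r
    unfold trigPowL1
    simp_rw [trigPow_apply]
    rfl
  have hA1 : trigL1 c = A 1 := by
    unfold trigL1
    simp_rw [trig_apply, hA, pow_one]
    rfl
  have hA0 : ∀ r, 0 ≤ A r := fun r => integral_nonneg fun x => norm_nonneg _
  have hApow : ∀ r : ℕ, A (r + 1) ≤ A 1 ^ (r + 1) := by
    intro r
    induction r with
    | zero => simpa using le_refl (A 1)
    | succ p ih =>
      have h1 : A (p + 1 + 1) ≤ A 1 * A (p + 1) := by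
        have h := L1_mul_le s (fun n => c n) (fun n => c n ^ (p + 1))
        simp only [hA, pow_one]
        calc (∫ x, ‖∑ n ∈ s, (c n ^ (p + 1 + 1)) * fourier n x‖ ∂μ)
            = ∫ x, ‖∑ n ∈ s, ((c n) * c n ^ (p + 1)) * fourier n x‖ ∂μ := by
              simp_rw [← pow_succ']
          _ ≤ _ := h
      calc A (p + 1 + 1) ≤ A 1 * A (p + 1) := h1
        _ ≤ A 1 * A 1 ^ (p + 1) := mul_le_mul_of_nonneg_left ih (hA0 1)
        _ = A 1 ^ (p + 1 + 1) := (pow_succ' _ _).symm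
  have hcoef : ∀ n : ℤ, ‖c n‖ ≤ A 1 := by
    intro n
    have hIeq : (∫ x, (fourier (-n) x : ℂ) * ∑ q ∈ s, (c q : ℂ) * fourier q x ∂μ) = c n := by
      have key : ∀ x : Circ, (fourier (-n) x : ℂ) * ∑ q ∈ s, (c q : ℂ) * fourier q x
          = ∑ q ∈ s, (c q : ℂ) * fourier (q + -n) x := by
        intro x
        rw [Finset.mul_sum]
        refine Finset.sum_congr rfl fun q _ => ?_
        rw [fourier_add]; ring
      simp_rw [key]
      rw [integral_finset_sum _ (fun q _ => hIntC (fun x => (c q : ℂ) * fourier (q + -n) x)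
        (continuous_const.mul (map_continuous (fourier (q + -n)))))]
      have hterm : ∀ q ∈ s, (∫ x, (c q : ℂ) * fourier (q + -n) x ∂μ)
          = (c q : ℂ) * if q + -n = 0 then 1 else 0 := fun q _ => by
        rw [MeasureTheory.integral_const_mul, fourier_int]
      rw [Finset.sum_congr rfl hterm]
      have hcase : ∀ q : ℤ, q + -n = 0 ↔ q = n := fun q => by omega
      simp only [hcase, mul_ite, mul_one, mul_zero]
      rw [Finset.sum_ite_eq' s n (fun q => (c q : ℂ))]
      by_cases hn : n ∈ s
      · simp [hn]
      · simp [hn, Finsupp.notMem_support_iff.mp (by simpa [hs] using hn)]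
    calc ‖c n‖ = ‖∫ x, (fourier (-n) x : ℂ) * ∑ q ∈ s, (c q : ℂ) * fourier q x ∂μ‖ := by
          rw [hIeq]
      _ ≤ ∫ x, ‖(fourier (-n) x : ℂ) * ∑ q ∈ s, (c q : ℂ) * fourier q x‖ ∂μ :=
          norm_integral_le_integral_norm _
      _ = A 1 := by
          have hnorm1 : ∀ x : Circ, ‖(fourier (-n) x : ℂ)‖ = 1 := fun x => Circle.norm_coe _
          simp_rw [norm_mul, hnorm1, one_mul, hA, pow_one]
  obtain ⟨i₁, j₁, hij₁, hd₁⟩ := hδ.1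
  have hδpos : 0 < δ := by rw [hd₁]; exact dist_pos.mpr fun h => hij₁ (hinj h)
  have hδle : ∀ i j : Fin (k+1), i ≠ j → δ ≤ ‖Λ i - Λ j‖ := fun i j h => by
    simpa [dist_eq_norm] using hδ.2 ⟨i, j, h, rfl⟩
  obtain ⟨i₀, hi₀⟩ := hmax.1
  have hlmax0 : 0 ≤ lmax := hi₀ ▸ norm_nonneg _
  have hΛle : ∀ i, ‖Λ i‖ ≤ lmax := fun i => hmax.2 ⟨i, rfl⟩
  have hlmaxA : lmax ≤ A 1 := by
    obtain ⟨n₀, hn₀⟩ : ∃ n₀, c n₀ = Λ i₀ := by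
      have h : Λ i₀ ∈ Set.range ⇑c := by rw [hran]; exact ⟨i₀, rfl⟩
      exact h
    calc lmax = ‖Λ i₀‖ := hi₀.symm
      _ = ‖c n₀‖ := by rw [hn₀]
      _ ≤ A 1 := hcoef n₀
  have hmem : ∀ n : ℤ, ∃ i, Λ i = c n := fun n => by
    have h : c n ∈ Set.range Λ := by rw [← hran]; exact ⟨n, rfl⟩
    exact h
  choose ι hι using hmem
  have hι0 : ∀ n ∈ s, ι n ≠ 0 := by
    intro n hn h0
    have hc0 : c n = 0 := by rw [← hι n, h0, hΛ0]
    exact (Finsupp.mem_support_iff.mp (by simpa [hs] using hn)) hc0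
  set C : ℝ := δ⁻¹ ^ k * 2 ^ k * A 1 ^ k with hC
  have hBi : ∀ i : Fin (k+1), i ≠ 0 →
      (∫ x, ‖∑ n ∈ s.filter fun n => ι n = i, (c n ^ m) * fourier n x‖ ∂μ)
        ≤ lmax ^ m * C := by
    intro i hi
    set J : Finset (Fin (k+1)) := Finset.univ.erase i with hJ
    have hJcard : J.card = k := by
      rw [hJ, Finset.card_erase_of_mem (Finset.mem_univ i), Finset.card_univ]
      simp
    set D : ℂ := ∏ j ∈ J, (Λ i - Λ j) with hD
    have hDlow : δ ^ k ≤ ‖D‖ := by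
      rw [hD, norm_prod]
      calc δ ^ k = ∏ _j ∈ J, δ := by rw [Finset.prod_const, hJcard]
        _ ≤ ∏ j ∈ J, ‖Λ i - Λ j‖ := by
            refine Finset.prod_le_prod (fun _ _ => le_of_lt hδpos) (fun j hj => ?_)
            exact hδle i j fun h => (Finset.mem_erase.mp hj).1 h.symm
    have hDpos : 0 < ‖D‖ := lt_of_lt_of_le (pow_pos hδpos k) hDlow
    have hDne : D ≠ 0 := by
      intro h; rw [h] at hDpos; simp at hDpos
    -- pull out the constant Λ i ^ m
    have hstep : ∀ x : Circ, (∑ n ∈ s.filter fun n => ι n = i, (c n ^ m) * fourier n x)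
        = Λ i ^ m * ∑ n ∈ s.filter (fun n => ι n = i), (fourier n x : ℂ) := by
      intro x
      rw [Finset.mul_sum]
      refine Finset.sum_congr rfl fun n hn => ?_
      obtain ⟨hns, hni⟩ := Finset.mem_filter.mp hn
      rw [← hι n, hni]
    have hBform : ∀ x : Circ, (∑ n ∈ s.filter (fun n => ι n = i), (fourier n x : ℂ))
        = D⁻¹ * ∑ t ∈ J.powerset, (∏ j ∈ t, (-Λ j)) *
            ∑ n ∈ s, c n ^ (k - t.card) * fourier n x := by
      intro x
      rw [Finset.sum_filter]
      have h1 : ∀ n ∈ s, (if ι n = i then (fourier n x : ℂ) else 0)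
          = (D⁻¹ * ∏ j ∈ J, ((c n : ℂ) - Λ j)) * fourier n x := by
        intro n hn
        by_cases h : ι n = i
        · simp only [h, if_true]
          have hprod : ∏ j ∈ J, ((c n : ℂ) - Λ j) = D := by
            rw [hD]; refine Finset.prod_congr rfl fun j _ => ?_; rw [← hι n, h]
          rw [hprod, inv_mul_cancel₀ hDne, one_mul]
        · simp only [h, if_false]
          have hprod : ∏ j ∈ J, ((c n : ℂ) - Λ j) = 0 := by
            refine Finset.prod_eq_zero (Finset.mem_erase.mpr ⟨h, Finset.mem_univ _⟩) ?_
            rw [← hι n]; ring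
          rw [hprod]; ring
      rw [Finset.sum_congr rfl h1]
      have h2 : ∀ n ∈ s, (D⁻¹ * ∏ j ∈ J, ((c n : ℂ) - Λ j)) * fourier n x
          = D⁻¹ * ∑ t ∈ J.powerset, (∏ j ∈ t, (-Λ j)) *
              (c n ^ (k - t.card) * fourier n x) := by
        intro n hn
        have hexp : ∏ j ∈ J, ((c n : ℂ) - Λ j)
            = ∑ t ∈ J.powerset, (∏ j ∈ t, (-Λ j)) * c n ^ (k - t.card) := by
          calc ∏ j ∈ J, ((c n : ℂ) - Λ j) = ∏ j ∈ J, (-Λ j + c n) :=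
                Finset.prod_congr rfl fun j _ => by ring
            _ = ∑ t ∈ J.powerset, (∏ j ∈ t, -Λ j) * ∏ _j ∈ J \ t, (c n : ℂ) :=
                Finset.prod_add _ _ _
            _ = ∑ t ∈ J.powerset, (∏ j ∈ t, -Λ j) * c n ^ (k - t.card) := by
                refine Finset.sum_congr rfl fun t ht => ?_
                rw [Finset.prod_const, Finset.card_sdiff_of_subset (Finset.mem_powerset.mp ht), hJcard]
        rw [hexp, mul_assoc, Finset.sum_mul]
        congr 1
        refine Finset.sum_congr rfl fun t _ => by ring
      rw [Finset.sum_congr rfl h2, ← Finset.mul_sum]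
      congr 1
      rw [Finset.sum_comm]
      exact Finset.sum_congr rfl fun t _ => (Finset.mul_sum _ _ _).symm
    -- bound the L1 norm of the indicator polynomial
    have hterm_bound : ∀ t ∈ J.powerset,
        ‖∏ j ∈ t, (-Λ j)‖ * A (k - t.card) ≤ A 1 ^ k := by
      intro t ht
      by_cases hteq : t = J
      · have : ∏ j ∈ t, (-Λ j) = 0 := by
          refine Finset.prod_eq_zero (i := 0) ?_ (by rw [hΛ0, neg_zero])
          rw [hteq, hJ]
          exact Finset.mem_erase.mpr ⟨Ne.symm hi, Finset.mem_univ _⟩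
        rw [this, norm_zero, zero_mul]
        exact pow_nonneg (hA0 1) k
      · have htss : t ⊆ J := Finset.mem_powerset.mp ht
        have htlt : t.card < k := by
          have h' := Finset.card_lt_card (Finset.ssubset_iff_subset_ne.mpr ⟨htss, hteq⟩)
          rwa [hJcard] at h'
        have h1le : 1 ≤ k - t.card := by omega
        have hpow : A (k - t.card) ≤ A 1 ^ (k - t.card) := by
          have := hApow (k - t.card - 1)
          rwa [Nat.sub_add_cancel h1le] at this
        have hcoefb : ‖∏ j ∈ t, (-Λ j)‖ ≤ A 1 ^ t.card := by
          rw [norm_prod]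
          calc ∏ j ∈ t, ‖-Λ j‖ ≤ ∏ _j ∈ t, A 1 := by
                refine Finset.prod_le_prod (fun _ _ => norm_nonneg _) (fun j _ => ?_)
                rw [norm_neg]
                exact (hΛle j).trans hlmaxA
            _ = A 1 ^ t.card := Finset.prod_const _
        calc ‖∏ j ∈ t, (-Λ j)‖ * A (k - t.card)
            ≤ A 1 ^ t.card * A 1 ^ (k - t.card) :=
              mul_le_mul hcoefb hpow (hA0 _) (pow_nonneg (hA0 1) _)
          _ = A 1 ^ k := by rw [← pow_add]; congr 1; omega
    have hBbound : (∫ x, ‖∑ n ∈ s.filter (fun n => ι n = i), (fourier n x : ℂ)‖ ∂μ)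
        ≤ δ⁻¹ ^ k * (2 ^ k * A 1 ^ k) := by
      have hint_t : ∀ t : Finset (Fin (k+1)), Integrable
          (fun x : Circ => ‖(∏ j ∈ t, (-Λ j)) * ∑ n ∈ s, c n ^ (k - t.card) * fourier n x‖) μ :=
        fun t => hInt _ (Continuous.norm (continuous_const.mul (cont_trig s _)))
      calc (∫ x, ‖∑ n ∈ s.filter (fun n => ι n = i), (fourier n x : ℂ)‖ ∂μ)
          = ∫ x, ‖D⁻¹ * ∑ t ∈ J.powerset, (∏ j ∈ t, (-Λ j)) *
              ∑ n ∈ s, c n ^ (k - t.card) * fourier n x‖ ∂μ := by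
            simp_rw [hBform]
        _ = ‖D⁻¹‖ * ∫ x, ‖∑ t ∈ J.powerset, (∏ j ∈ t, (-Λ j)) *
              ∑ n ∈ s, c n ^ (k - t.card) * fourier n x‖ ∂μ := by
            simp_rw [norm_mul]
            rw [MeasureTheory.integral_const_mul]
        _ ≤ ‖D⁻¹‖ * ∑ t ∈ J.powerset, ∫ x, ‖(∏ j ∈ t, (-Λ j)) *
              ∑ n ∈ s, c n ^ (k - t.card) * fourier n x‖ ∂μ := by
            refine mul_le_mul_of_nonneg_left ?_ (norm_nonneg _)
            rw [← integral_finset_sum _ (fun t _ => hint_t t)]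
            refine integral_mono (hInt _ ?_) (hInt _ ?_) (fun x => norm_sum_le _ _)
            · exact Continuous.norm (continuous_finset_sum _ fun t _ =>
                continuous_const.mul (cont_trig s _))
            · exact continuous_finset_sum _ fun t _ =>
                Continuous.norm (continuous_const.mul (cont_trig s _))
        _ ≤ ‖D⁻¹‖ * ∑ t ∈ J.powerset, A 1 ^ k := by
            refine mul_le_mul_of_nonneg_left (Finset.sum_le_sum fun t ht => ?_) (norm_nonneg _)
            have : (∫ x, ‖(∏ j ∈ t, (-Λ j)) *
                ∑ n ∈ s, c n ^ (k - t.card) * fourier n x‖ ∂μ)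
                = ‖∏ j ∈ t, (-Λ j)‖ * A (k - t.card) := by
              simp_rw [norm_mul]
              rw [MeasureTheory.integral_const_mul]
            rw [this]
            exact hterm_bound t ht
        _ = ‖D⁻¹‖ * (2 ^ k * A 1 ^ k) := by
            rw [Finset.sum_const, Finset.card_powerset, hJcard, nsmul_eq_mul]
            push_cast
            ring
        _ ≤ δ⁻¹ ^ k * (2 ^ k * A 1 ^ k) := by
            refine mul_le_mul_of_nonneg_right ?_
              (mul_nonneg (by norm_num) (pow_nonneg (hA0 1) k))
            rw [norm_inv, inv_pow]
            exact inv_anti₀ (pow_pos hδpos k) hDlow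
    -- combine
    calc (∫ x, ‖∑ n ∈ s.filter fun n => ι n = i, (c n ^ m) * fourier n x‖ ∂μ)
        = ‖Λ i ^ m‖ * ∫ x, ‖∑ n ∈ s.filter (fun n => ι n = i), (fourier n x : ℂ)‖ ∂μ := by
          simp_rw [hstep, norm_mul]
          rw [MeasureTheory.integral_const_mul]
      _ ≤ lmax ^ m * (δ⁻¹ ^ k * (2 ^ k * A 1 ^ k)) := by
          refine mul_le_mul ?_ hBbound (integral_nonneg fun x => norm_nonneg _)
            (pow_nonneg hlmax0 m)
          rw [norm_pow]
          exact pow_le_pow_left₀ (norm_nonneg _) (hΛle i) m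
      _ = lmax ^ m * C := by rw [hC]; ring
  -- main decomposition
  have hsplit : ∀ x : Circ, (∑ n ∈ s, (c n ^ m) * fourier n x)
      = ∑ i : Fin (k+1), ∑ n ∈ s.filter (fun n => ι n = i), (c n ^ m) * fourier n x :=
    fun x => (Finset.sum_fiberwise_of_maps_to (fun n _ => Finset.mem_univ (ι n)) _).symm
  have hzero : (∫ x, ‖∑ n ∈ s.filter (fun n => ι n = (0 : Fin (k+1))),
      (c n ^ m) * fourier n x‖ ∂μ) = 0 := by
    have hempty : s.filter (fun n => ι n = (0 : Fin (k+1))) = ∅ :=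
      Finset.filter_false_of_mem fun n hn => hι0 n hn
    simp [hempty]
  calc trigPowL1 c m = A m := hAeq m
    _ = ∫ x, ‖∑ i : Fin (k+1), ∑ n ∈ s.filter (fun n => ι n = i),
          (c n ^ m) * fourier n x‖ ∂μ := by
        simp_rw [hA, hsplit]
    _ ≤ ∫ x, ∑ i : Fin (k+1), ‖∑ n ∈ s.filter (fun n => ι n = i),
          (c n ^ m) * fourier n x‖ ∂μ := by
        refine integral_mono (hInt _ ?_) (hInt _ ?_) (fun x => norm_sum_le _ _)
        · exact Continuous.norm (continuous_finset_sum _ fun i _ => cont_trig _ _)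
        · exact continuous_finset_sum _ fun i _ => Continuous.norm (cont_trig _ _)
    _ = ∑ i : Fin (k+1), ∫ x, ‖∑ n ∈ s.filter (fun n => ι n = i),
          (c n ^ m) * fourier n x‖ ∂μ := by
        exact integral_finset_sum _ fun i _ => hInt _ (Continuous.norm (cont_trig _ _))
    _ ≤ ∑ i : Fin (k+1), (if i = 0 then 0 else lmax ^ m * C) := by
        refine Finset.sum_le_sum fun i _ => ?_
        by_cases h : i = 0
        · simp only [h, if_true]
          rw [h] at *
          exact le_of_eq hzero
        · simp only [h, if_false]
          exact hBi i h
    _ = (k : ℝ) * (lmax ^ m * C) := by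
        rw [Finset.sum_ite, Finset.sum_const_zero, Finset.sum_const, zero_add, nsmul_eq_mul]
        congr 2
        rw [Finset.filter_ne', Finset.card_erase_of_mem (Finset.mem_univ _), Finset.card_univ]
        simp
    _ = (k : ℝ) * δ⁻¹ ^ k * 2 ^ k * trigL1 c ^ k * lmax ^ m := by
        rw [hA1, hC]; ring
end
end

section
/- Let S = ⋃_{k=1}^∞ B_k ⊂ ℂ be a union of open balls such that 0 ∈ closure(S). Then there exists a set K ⊂ ℂ homeomorphic to the Cantor set such that K − K ⊂ closure(S ∪ (−S)), where K − K = {x − y : x, y ∈ K} and −S = {−z : z ∈ S}. -/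
open scoped Pointwise

open Metric Set

lemma cantor_aux (S : Set ℂ) (hSo : IsOpen S) (h0 : (0 : ℂ) ∈ closure S) :
    ∃ K : Set ℂ, K.Nonempty ∧ IsCompact K ∧ Perfect K ∧ IsTotallyDisconnected K ∧
      K - K ⊆ S ∪ -S ∪ {0} := by
  classical
  -- Selection lemma: arbitrarily small balls inside `S` with center close to (but not at) `0`.
  have L : ∀ δ : ℝ, ∃ z : ℂ, ∃ r : ℝ,
      0 < δ → z ≠ 0 ∧ ‖z‖ < δ ∧ 0 < r ∧ r ≤ ‖z‖ ∧ Metric.ball z r ⊆ S := by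
    intro δ
    by_cases hδ : 0 < δ
    swap
    · exact ⟨1, 1, fun h => absurd h hδ⟩
    have hw : ∃ w : ℂ, w ∈ S ∧ w ≠ 0 ∧ ‖w‖ < δ := by
      obtain ⟨w, hwS, hwd⟩ := Metric.mem_closure_iff.mp h0 δ hδ
      rw [dist_comm, dist_zero_right] at hwd
      by_cases hw0 : w = 0
      · subst hw0
        obtain ⟨ρ, hρ, hball⟩ := Metric.isOpen_iff.mp hSo 0 hwS
        have hm : 0 < min ρ δ / 2 := by
          have := lt_min hρ hδ
          positivity
        refine ⟨(min ρ δ / 2 : ℝ), ?_, ?_, ?_⟩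
        · apply hball
          rw [Metric.mem_ball, dist_zero_right]
          rw [Complex.norm_real, Real.norm_of_nonneg hm.le]
          have : min ρ δ ≤ ρ := min_le_left _ _
          linarith
        · simpa using hm.ne'
        · rw [Complex.norm_real, Real.norm_of_nonneg hm.le]
          have : min ρ δ ≤ δ := min_le_right _ _
          linarith
      · exact ⟨w, hwS, hw0, hwd⟩
    obtain ⟨w, hwS, hw0, hwδ⟩ := hw
    obtain ⟨ρ, hρ, hball⟩ := Metric.isOpen_iff.mp hSo w hwS
    refine ⟨w, min ρ ‖w‖, fun _ => ⟨hw0, hwδ, ?_, min_le_right _ _, ?_⟩⟩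
    · exact lt_min hρ (norm_pos_iff.mpr hw0)
    · intro x hx
      exact hball (Metric.mem_ball.mpr (lt_of_lt_of_le (Metric.mem_ball.mp hx) (min_le_left _ _)))
  -- Build the sequence of balls recursively.
  obtain ⟨z, r, inv, hstep⟩ :
      ∃ (z : ℕ → ℂ) (r : ℕ → ℝ),
        (∀ n, z n ≠ 0 ∧ 0 < r n ∧ r n ≤ ‖z n‖ ∧ Metric.ball (z n) (r n) ⊆ S) ∧
        (∀ n, ‖z (n + 1)‖ < r n / 4) := by
    choose Z R hZR using L
    set q : ℕ → ℂ × ℝ :=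
      fun n => Nat.rec (Z 1, R 1) (fun _ p => (Z (p.2 / 4), R (p.2 / 4))) n with hq
    have inv : ∀ n, (q n).1 ≠ 0 ∧ 0 < (q n).2 ∧ (q n).2 ≤ ‖(q n).1‖ ∧
        Metric.ball (q n).1 (q n).2 ⊆ S := by
      intro n
      induction n with
      | zero =>
        have h := hZR 1 one_pos
        exact ⟨h.1, h.2.2.1, h.2.2.2.1, h.2.2.2.2⟩
      | succ n ih =>
        have h4 : 0 < (q n).2 / 4 := by linarith [ih.2.1]
        have h := hZR ((q n).2 / 4) h4
        exact ⟨h.1, h.2.2.1, h.2.2.2.1, h.2.2.2.2⟩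
    have hstep : ∀ n, ‖(q (n + 1)).1‖ < (q n).2 / 4 := by
      intro n
      have h4 : 0 < (q n).2 / 4 := by linarith [(inv n).2.1]
      exact (hZR ((q n).2 / 4) h4).2.1
    exact ⟨fun n => (q n).1, fun n => (q n).2, inv, hstep⟩
  have hz0 : 0 < ‖z 0‖ := norm_pos_iff.mpr (inv 0).1
  -- decay estimates
  have hdecay : ∀ N n, ‖z (n + (N + 1))‖ ≤ r N / 4 * (1 / 4) ^ n := by
    intro N n
    induction n with
    | zero => simpa using (hstep N).le
    | succ n ih =>
      have h1 : ‖z (n + (N + 1) + 1)‖ ≤ r (n + (N + 1)) / 4 := (hstep _).le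
      have h2 : r (n + (N + 1)) ≤ ‖z (n + (N + 1))‖ := (inv _).2.2.1
      have heq : n + 1 + (N + 1) = n + (N + 1) + 1 := by ring
      rw [heq]
      calc ‖z (n + (N + 1) + 1)‖ ≤ ‖z (n + (N + 1))‖ / 4 := by linarith
        _ ≤ (r N / 4 * (1 / 4) ^ n) / 4 := by linarith
        _ = r N / 4 * (1 / 4) ^ (n + 1) := by ring
  have hgeom : ∀ n, ‖z n‖ ≤ ‖z 0‖ * (1 / 4) ^ n := by
    intro n
    induction n with
    | zero => simp
    | succ n ih =>
      have h1 := (hstep n).le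
      have h2 := (inv n).2.2.1
      calc ‖z (n + 1)‖ ≤ ‖z n‖ / 4 := by linarith
        _ ≤ ‖z 0‖ * (1 / 4) ^ n / 4 := by linarith
        _ = ‖z 0‖ * (1 / 4) ^ (n + 1) := by ring
  have hsummable_u : Summable (fun n : ℕ => ‖z 0‖ * (1 / 4) ^ n) :=
    (summable_geometric_of_lt_one (by norm_num) (by norm_num)).mul_left _
  have hsummand : ∀ g : ℕ → ℂ, (∀ n, ‖g n‖ ≤ ‖z n‖) → Summable g := by
    intro g hg
    exact Summable.of_norm_bounded hsummable_u (fun n => (hg n).trans (hgeom n))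
  -- the Cantor map
  set f : (ℕ → Bool) → ℂ := fun ε => ∑' n, (if ε n then z n else 0) with hf
  have hterm : ∀ (ε : ℕ → Bool) (n : ℕ), ‖(if ε n then z n else 0 : ℂ)‖ ≤ ‖z n‖ := by
    intro ε n; split <;> simp
  have hfsummable : ∀ ε : ℕ → Bool, Summable (fun n => (if ε n then z n else 0 : ℂ)) :=
    fun ε => hsummand _ (hterm ε)
  set d : (ℕ → Bool) → (ℕ → Bool) → ℕ → ℂ :=
    fun ε ε' n => (if ε n then z n else 0) - (if ε' n then z n else 0) with hd
  have hdnorm : ∀ ε ε' n, ‖d ε ε' n‖ ≤ ‖z n‖ := by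
    intro ε ε' n
    by_cases h1 : ε n <;> by_cases h2 : ε' n <;> simp [hd, h1, h2]
  have hdsummable : ∀ ε ε', Summable (d ε ε') := fun ε ε' => hsummand _ (hdnorm ε ε')
  have hdiff : ∀ ε ε', f ε - f ε' = ∑' n, d ε ε' n := by
    intro ε ε'
    exact (Summable.tsum_sub (hfsummable ε) (hfsummable ε')).symm
  have hdN : ∀ ε ε' N, ε N ≠ ε' N → d ε ε' N = z N ∨ d ε ε' N = -z N := by
    intro ε ε' N h
    cases hε : ε N <;> cases hε' : ε' N
    · exact absurd (hε.trans hε'.symm) h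
    · right; simp [hd, hε, hε']
    · left; simp [hd, hε, hε']
    · exact absurd (hε.trans hε'.symm) h
  have hdNnorm : ∀ ε ε' N, ε N ≠ ε' N → ‖d ε ε' N‖ = ‖z N‖ := by
    intro ε ε' N h
    rcases hdN ε ε' N h with h' | h' <;> simp [h']
  -- tail estimate
  have htail : ∀ (N : ℕ) (ε ε' : ℕ → Bool), ‖∑' n, d ε ε' (n + (N + 1))‖ ≤ r N / 3 := by
    intro N ε ε'
    have hb : ∀ n : ℕ, ‖d ε ε' (n + (N + 1))‖ ≤ r N / 4 * (1 / 4) ^ n :=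
      fun n => (hdnorm ε ε' _).trans (hdecay N n)
    have hsg : Summable (fun n : ℕ => r N / 4 * (1 / 4) ^ n) :=
      (summable_geometric_of_lt_one (by norm_num) (by norm_num)).mul_left _
    have hs1 : Summable (fun n => ‖d ε ε' (n + (N + 1))‖) :=
      Summable.of_nonneg_of_le (fun n => norm_nonneg _) hb hsg
    calc ‖∑' n, d ε ε' (n + (N + 1))‖ ≤ ∑' n, ‖d ε ε' (n + (N + 1))‖ :=
          norm_tsum_le_tsum_norm hs1
      _ ≤ ∑' n : ℕ, r N / 4 * (1 / 4) ^ n := Summable.tsum_le_tsum hb hs1 hsg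
      _ = r N / 4 * (1 - 1 / 4)⁻¹ := by
          rw [tsum_mul_left, tsum_geometric_of_lt_one (by norm_num) (by norm_num)]
      _ = r N / 3 := by ring
  -- the key estimate
  have estimate : ∀ (ε ε' : ℕ → Bool) (N : ℕ), (∀ m, m < N → ε m = ε' m) →
      ‖f ε - f ε' - d ε ε' N‖ ≤ r N / 3 := by
    intro ε ε' N hN
    rw [hdiff, ← Summable.sum_add_tsum_nat_add (N + 1) (hdsummable ε ε')]
    have hsum : ∑ i ∈ Finset.range (N + 1), d ε ε' i = d ε ε' N := by
      rw [Finset.sum_range_succ]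
      have hz : ∑ i ∈ Finset.range N, d ε ε' i = 0 := by
        apply Finset.sum_eq_zero
        intro i hi
        simp [hd, hN i (Finset.mem_range.mp hi)]
      rw [hz, zero_add]
    rw [hsum, add_sub_cancel_left]
    exact htail N ε ε'
  -- injectivity
  have hinj : Function.Injective f := by
    intro ε ε' hfe
    by_contra hne
    have hne' : ∃ n, ε n ≠ ε' n := by
      by_contra h; push_neg at h; exact hne (funext h)
    have hNd : ε (Nat.find hne') ≠ ε' (Nat.find hne') := Nat.find_spec hne'
    have hlt : ∀ m, m < Nat.find hne' → ε m = ε' m :=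
      fun m hm => not_not.mp (Nat.find_min hne' hm)
    have hest := estimate ε ε' (Nat.find hne') hlt
    rw [hfe, sub_self, zero_sub, norm_neg, hdNnorm ε ε' _ hNd] at hest
    have hrN := (inv (Nat.find hne')).2.1
    have hrz := (inv (Nat.find hne')).2.2.1
    linarith
  -- continuity
  have hcont : Continuous f := by
    apply continuous_tsum
    · intro n
      exact (continuous_of_discreteTopology
        (f := fun b : Bool => if b then z n else 0)).comp (continuous_apply n)
    · exact hsummable_u
    · intro n ε; exact (hterm ε n).trans (hgeom n)
  have hcomp : IsCompact (Set.range f) := isCompact_range hcont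
  -- flipping one coordinate
  have hflip : ∀ (ε : ℕ → Bool) (n : ℕ),
      f (Function.update ε n (!ε n)) - f ε = d (Function.update ε n (!ε n)) ε n := by
    intro ε n
    rw [hdiff]
    apply tsum_eq_single
    intro m hm
    simp [hd, Function.update_of_ne hm]
  have hflipne : ∀ (ε : ℕ → Bool) (n : ℕ), (Function.update ε n (!ε n)) n ≠ ε n := by
    intro ε n
    rw [Function.update_self]
    simp
  -- perfection
  have hperf : Perfect (Set.range f) := by
    constructor
    · exact hcomp.isClosed
    · intro x hx
      rw [accPt_iff_nhds]
      intro U hU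
      obtain ⟨ε, rfl⟩ := hx
      obtain ⟨δ, hδ, hball⟩ := Metric.mem_nhds_iff.mp hU
      obtain ⟨n, hn⟩ : ∃ n : ℕ, ‖z 0‖ * (1 / 4) ^ n < δ := by
        obtain ⟨n, hn⟩ := exists_pow_lt_of_lt_one (div_pos hδ hz0) (by norm_num : (1:ℝ)/4 < 1)
        refine ⟨n, ?_⟩
        calc ‖z 0‖ * (1 / 4) ^ n < ‖z 0‖ * (δ / ‖z 0‖) := (mul_lt_mul_iff_right₀ hz0).mpr hn
          _ = δ := mul_div_cancel₀ δ hz0.ne'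
      refine ⟨f (Function.update ε n (!ε n)), ⟨hball ?_, mem_range_self _⟩, ?_⟩
      · rw [Metric.mem_ball, dist_eq_norm, hflip ε n,
          hdNnorm _ _ n (hflipne ε n)]
        exact lt_of_le_of_lt (hgeom n) hn
      · intro h
        have h2 := congrFun (hinj h) n
        exact hflipne ε n h2
  -- total disconnectedness
  have htd : IsTotallyDisconnected (Set.range f) := by
    intro t hts htc
    intro x hx y hy
    by_contra hxy
    obtain ⟨ε, rfl⟩ := hts hx
    obtain ⟨ε', rfl⟩ := hts hy
    have hne : ∃ n, ε n ≠ ε' n := by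
      by_contra h; push_neg at h; exact hxy (congrArg f (funext h))
    obtain ⟨N, hN⟩ := hne
    have hAclosed : IsClosed {η : ℕ → Bool | η N = ε N} :=
      isClosed_eq (continuous_apply N) continuous_const
    have hBclosed : IsClosed {η : ℕ → Bool | η N = ε' N} :=
      isClosed_eq (continuous_apply N) continuous_const
    have hAc : IsCompact (f '' {η | η N = ε N}) := (hAclosed.isCompact).image hcont
    have hBc : IsCompact (f '' {η | η N = ε' N}) := (hBclosed.isCompact).image hcont
    have hdisj : Disjoint (f '' {η | η N = ε N}) (f '' {η | η N = ε' N}) := by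
      rw [Set.disjoint_left]
      rintro a ⟨η, hη, rfl⟩ ⟨η', hη', hfe⟩
      have : η' = η := hinj hfe
      subst this
      exact hN (hη ▸ hη')
    obtain ⟨u, v, hu, hv, hAu, hBv, huv⟩ :=
      SeparatedNhds.of_isCompact_isCompact hAc hBc hdisj
    have hcover : t ⊆ u ∪ v := by
      intro a ha
      obtain ⟨η, rfl⟩ := hts ha
      have hcase : η N = ε N ∨ η N = ε' N :=
        (Bool.eq_or_eq_not (η N) (ε N)).imp id
          (fun h => h.trans (Bool.eq_not_of_ne hN.symm).symm)
      rcases hcase with h | h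
      · exact Or.inl (hAu ⟨η, h, rfl⟩)
      · exact Or.inr (hBv ⟨η, h, rfl⟩)
    have hxu : (t ∩ u).Nonempty := ⟨f ε, hx, hAu ⟨ε, rfl, rfl⟩⟩
    have hyv : (t ∩ v).Nonempty := ⟨f ε', hy, hBv ⟨ε', rfl, rfl⟩⟩
    obtain ⟨p, _, hpu, hpv⟩ := htc u v hu hv hcover hxu hyv
    exact (huv.le_bot ⟨hpu, hpv⟩).elim
  -- differences land in `S ∪ -S ∪ {0}`
  refine ⟨Set.range f, ⟨f (fun _ => true), mem_range_self _⟩, hcomp, hperf, htd, ?_⟩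
  intro x hx
  rw [Set.mem_sub] at hx
  obtain ⟨a, ha, b, hb, rfl⟩ := hx
  obtain ⟨ε, rfl⟩ := ha
  obtain ⟨ε', rfl⟩ := hb
  by_cases heq : ε = ε'
  · subst heq
    right
    simp
  · have hne' : ∃ n, ε n ≠ ε' n := by
      by_contra h; push_neg at h; exact heq (funext h)
    have hNd : ε (Nat.find hne') ≠ ε' (Nat.find hne') := Nat.find_spec hne'
    have hlt : ∀ m, m < Nat.find hne' → ε m = ε' m :=
      fun m hm => not_not.mp (Nat.find_min hne' hm)
    have hest := estimate ε ε' (Nat.find hne') hlt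
    have hrN := (inv (Nat.find hne')).2.1
    have hsub := (inv (Nat.find hne')).2.2.2
    rcases hdN ε ε' (Nat.find hne') hNd with hcase | hcase
    · left; left
      apply hsub
      rw [Metric.mem_ball, dist_eq_norm, ← hcase]
      linarith [hest]
    · left; right
      rw [Set.mem_neg]
      apply hsub
      rw [Metric.mem_ball, dist_eq_norm]
      have : -(f ε - f ε') - z (Nat.find hne') = -(f ε - f ε' - d ε ε' (Nat.find hne')) := by
        rw [hcase]; ring
      rw [this, norm_neg]
      linarith [hest]

/-- **Lemma 16.** Let `S = ⋃ₖ Bₖ ⊆ ℂ` be a union of open balls with `0 ∈ closure S`. Then there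
exists a set `K` homeomorphic to the Cantor set (nonempty, compact, perfect, totally
disconnected) such that `K − K ⊆ closure (S ∪ −S)`. -/
theorem exists_cantor_sub_self_subset_closure (B : ℕ → Set ℂ)
    (hB : ∀ k, ∃ (c : ℂ) (ρ : ℝ), B k = Metric.ball c ρ)
    (h0 : (0 : ℂ) ∈ closure (⋃ k, B k)) :
    ∃ K : Set ℂ, K.Nonempty ∧ IsCompact K ∧ Perfect K ∧ IsTotallyDisconnected K ∧
      K - K ⊆ closure ((⋃ k, B k) ∪ -(⋃ k, B k)) := by
  have hSo : IsOpen (⋃ k, B k) := by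
    apply isOpen_iUnion
    intro k
    obtain ⟨c, ρ, hk⟩ := hB k
    rw [hk]
    exact Metric.isOpen_ball
  obtain ⟨K, h1, h2, h3, h4, h5⟩ := cantor_aux (⋃ k, B k) hSo h0
  refine ⟨K, h1, h2, h3, h4, ?_⟩
  intro x hx
  rcases h5 hx with (h | h) | h
  · exact subset_closure (Or.inl h)
  · exact subset_closure (Or.inr h)
  · rw [Set.mem_singleton_iff] at h
    subst h
    exact closure_mono Set.subset_union_left h0
end

section
/- Let (m_j), (r_j), (n_j) be increasing sequences of positive integers satisfying r_k > 2·Σ_{j=1}^{k−1} ((2^{n_j} − 1)m_j + r_j) for all k ≥ 2, and let (c_j) be a sequence of positive integers with c_j ∈ {r_j, m_j + r_j, 2m_j + r_j, …, (2^{n_j} − 1)m_j + r_j} for every j. If an integer s has a representation s = Σ_{j=1}^{N} b_j c_j with N ∈ ℕ, b_j ∈ {−1, 0, 1} and b_N ≠ 0, then this representation is unique: if also s = Σ_{j=1}^{M} b'_j c_j with b'_j ∈ {−1, 0, 1} and b'_M ≠ 0, then N = M and b_j = b'_j for all j. -/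
/-- **Lemma 21.** Let `(m_j), (r_j), (n_j)` (indexed by positive integers) be increasing
sequences of positive integers with `r_k > 2·Σ_{j=1}^{k-1}((2^{n_j}-1)m_j + r_j)` for `k ≥ 2`,
and let `c_j = l·m_j + r_j` for some `0 ≤ l ≤ 2^{n_j} - 1`. Then the representation of an
integer `s` as `s = Σ_{j=1}^N b_j c_j` with `b_j ∈ {-1,0,1}` and `b_N ≠ 0` is unique. -/
theorem signed_representation_unique (m r n : ℕ → ℕ)
    (hm : StrictMono m) (hr : StrictMono r) (hn : StrictMono n)
    (hmpos : ∀ j, 0 < m j) (hrpos : ∀ j, 0 < r j) (hnpos : ∀ j, 0 < n j)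
    (hgap : ∀ k, 2 ≤ k →
      2 * ∑ j ∈ Finset.Icc 1 (k - 1), ((2 ^ n j - 1) * m j + r j) < r k)
    (c : ℕ → ℕ) (hc : ∀ j, ∃ l : ℕ, l ≤ 2 ^ n j - 1 ∧ c j = l * m j + r j)
    (s : ℤ) (N M : ℕ) (hN : 1 ≤ N) (hM : 1 ≤ M) (b b' : ℕ → ℤ)
    (hb : ∀ j, b j = -1 ∨ b j = 0 ∨ b j = 1)
    (hb' : ∀ j, b' j = -1 ∨ b' j = 0 ∨ b' j = 1)
    (hbN : b N ≠ 0) (hbM : b' M ≠ 0)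
    (hs : s = ∑ j ∈ Finset.Icc 1 N, b j * (c j : ℤ))
    (hs' : s = ∑ j ∈ Finset.Icc 1 M, b' j * (c j : ℤ)) :
    N = M ∧ ∀ j, 1 ≤ j → j ≤ N → b j = b' j := by
  -- basic facts about c
  have hcpos : ∀ j, 0 < c j := by
    intro j
    obtain ⟨l, hl, hcl⟩ := hc j
    have := hrpos j
    omega
  have hcle : ∀ j, c j ≤ (2 ^ n j - 1) * m j + r j := by
    intro j
    obtain ⟨l, hl, hcl⟩ := hc j
    have : l * m j ≤ (2 ^ n j - 1) * m j := Nat.mul_le_mul_right _ hl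
    omega
  have hcr : ∀ j, r j ≤ c j := by
    intro j
    obtain ⟨l, hl, hcl⟩ := hc j
    omega
  -- gap for c
  have hcgap : ∀ k, 2 ≤ k → 2 * ∑ j ∈ Finset.Icc 1 (k - 1), c j < c k := by
    intro k hk
    have h1 : ∑ j ∈ Finset.Icc 1 (k - 1), c j
        ≤ ∑ j ∈ Finset.Icc 1 (k - 1), ((2 ^ n j - 1) * m j + r j) :=
      Finset.sum_le_sum fun j _ => hcle j
    have := hgap k hk
    have := hcr k
    omega
  -- core lemma: bounded coeffs summing to zero must vanish
  have key : ∀ K (d : ℕ → ℤ), (∀ j, |d j| ≤ 2) →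
      (∑ j ∈ Finset.Icc 1 K, d j * (c j : ℤ)) = 0 →
      ∀ j, 1 ≤ j → j ≤ K → d j = 0 := by
    intro K
    induction K with
    | zero => intro d _ _ j h1 h0; omega
    | succ K ih =>
      intro d hd hsum j hj1 hjK
      have hsplit : ∑ j ∈ Finset.Icc 1 (K + 1), d j * (c j : ℤ)
          = (∑ j ∈ Finset.Icc 1 K, d j * (c j : ℤ)) + d (K + 1) * (c (K + 1) : ℤ) :=
        Finset.sum_Icc_succ_top (by omega) _
      have hdK : d (K + 1) = 0 := by
        by_contra hne
        have h1le : (1 : ℤ) ≤ |d (K + 1)| := Int.one_le_abs hne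
        have hbound : |∑ j ∈ Finset.Icc 1 K, d j * (c j : ℤ)|
            ≤ ∑ j ∈ Finset.Icc 1 K, 2 * (c j : ℤ) := by
          refine (Finset.abs_sum_le_sum_abs _ _).trans ?_
          refine Finset.sum_le_sum fun i _ => ?_
          rw [abs_mul, abs_of_nonneg (by positivity : (0:ℤ) ≤ (c i : ℤ))]
          exact mul_le_mul_of_nonneg_right (hd i) (by positivity)
        have hlt : ∑ j ∈ Finset.Icc 1 K, 2 * (c j : ℤ) < (c (K + 1) : ℤ) := by
          rcases Nat.eq_zero_or_pos K with hK0 | hK0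
          · subst hK0; simp; exact_mod_cast hcpos 1
          · have := hcgap (K + 1) (by omega)
            have : 2 * ∑ j ∈ Finset.Icc 1 K, c j < c (K + 1) := by simpa using this
            push_cast [← Finset.mul_sum]
            rw [← Finset.mul_sum] at *
            exact_mod_cast this
        have heq : d (K + 1) * (c (K + 1) : ℤ)
            = -(∑ j ∈ Finset.Icc 1 K, d j * (c j : ℤ)) := by
          rw [hsplit] at hsum; linarith
        have : (c (K + 1) : ℤ) ≤ |d (K + 1) * (c (K + 1) : ℤ)| := by
          rw [abs_mul, abs_of_nonneg (by positivity : (0:ℤ) ≤ (c (K+1) : ℤ))]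
          nlinarith [Int.natCast_pos.mpr (hcpos (K + 1))]
        rw [heq, abs_neg] at this
        linarith
      rcases Nat.lt_or_ge j (K + 1) with hlt | hge
      · have hsum' : ∑ j ∈ Finset.Icc 1 K, d j * (c j : ℤ) = 0 := by
          rw [hsplit, hdK] at hsum; linarith
        exact ih d hd hsum' j hj1 (by omega)
      · have : j = K + 1 := by omega
        rw [this]; exact hdK
  -- the difference sequence
  set K := max N M with hK
  set d : ℕ → ℤ := fun j => (if j ≤ N then b j else 0) - (if j ≤ M then b' j else 0) with hd
  have hdbd : ∀ j, |d j| ≤ 2 := by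
    intro j
    have h1 := hb j
    have h2 := hb' j
    simp only [hd]
    split_ifs <;> rcases h1 with h|h|h <;> rcases h2 with h'|h'|h' <;> simp [h, h'] <;> norm_num
  have hsum1 : ∑ j ∈ Finset.Icc 1 K, (if j ≤ N then b j else 0) * (c j : ℤ)
      = ∑ j ∈ Finset.Icc 1 N, b j * (c j : ℤ) := by
    rw [← Finset.sum_subset (Finset.Icc_subset_Icc_right (le_max_left N M))]
    · refine Finset.sum_congr rfl fun i hi => ?_
      simp only [Finset.mem_Icc] at hi
      rw [if_pos hi.2]
    · intro x hx hx2
      simp only [Finset.mem_Icc] at hx hx2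
      rw [if_neg (by omega)]; ring
  have hsum2 : ∑ j ∈ Finset.Icc 1 K, (if j ≤ M then b' j else 0) * (c j : ℤ)
      = ∑ j ∈ Finset.Icc 1 M, b' j * (c j : ℤ) := by
    rw [← Finset.sum_subset (Finset.Icc_subset_Icc_right (le_max_right N M))]
    · refine Finset.sum_congr rfl fun i hi => ?_
      simp only [Finset.mem_Icc] at hi
      rw [if_pos hi.2]
    · intro x hx hx2
      simp only [Finset.mem_Icc] at hx hx2
      rw [if_neg (by omega)]; ring
  have hdsum : ∑ j ∈ Finset.Icc 1 K, d j * (c j : ℤ) = 0 := by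
    simp only [hd, sub_mul, Finset.sum_sub_distrib, hsum1, hsum2, ← hs, ← hs', sub_self]
  have hzero := key K d hdbd hdsum
  have hNM : N = M := by
    by_contra hne
    rcases Nat.lt_or_ge N M with h | h
    · have := hzero M hM (le_max_right N M)
      simp only [hd, if_neg (by omega : ¬ M ≤ N), if_pos (le_refl M)] at this
      omega
    · have hNM' : M < N := by omega
      have := hzero N hN (le_max_left N M)
      simp only [hd, if_pos (le_refl N), if_neg (by omega : ¬ N ≤ M)] at this
      omega
  refine ⟨hNM, fun j hj1 hjN => ?_⟩
  have := hzero j hj1 (le_trans hjN (le_max_left N M))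
  simp only [hd, if_pos hjN, if_pos (hNM ▸ hjN)] at this
  omega
end

section
/- For every n ∈ ℕ, the Rudin–Shapiro polynomial P_n has the form P_n(t) = Σ_{k=0}^{2^n − 1} a_k e^{ikt} with a_k ∈ {−1, 1} for all 0 ≤ k ≤ 2^n − 1; consequently ‖P_n‖_{L²(𝕋)} = 2^{n/2} (with respect to normalized Lebesgue measure on 𝕋), and moreover ‖P_n‖_{C(𝕋)} = sup_t |P_n(t)| ≤ 2^{(n+1)/2}. -/
open MeasureTheory Filter Complex Set AddCircle
open scoped Real ComplexConjugate

noncomputable section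

/-- The pair of Rudin–Shapiro polynomials `(P_n, Q_n)`, defined recursively by
`P₀ ≡ 1`, `Q₀ ≡ 1`, `P_{n+1}(t) = P_n(t) + e^{i 2^n t} Q_n(t)` and
`Q_{n+1}(t) = P_n(t) − e^{i 2^n t} Q_n(t)`. -/
def RS : ℕ → (ℝ → ℂ) × (ℝ → ℂ)
  | 0 => (fun _ => 1, fun _ => 1)
  | (n + 1) =>
      (fun t => (RS n).1 t + Complex.exp (Complex.I * 2 ^ n * t) * (RS n).2 t,
       fun t => (RS n).1 t - Complex.exp (Complex.I * 2 ^ n * t) * (RS n).2 t)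

/-- The `n`-th Rudin–Shapiro polynomial `P_n`. -/
def RSP (n : ℕ) : ℝ → ℂ := (RS n).1

lemma RS_normsq (n : ℕ) (t : ℝ) :
    ‖(RS n).1 t‖ ^ 2 + ‖(RS n).2 t‖ ^ 2 = 2 ^ (n + 1) := by
  induction n with
  | zero => norm_num [RS]
  | succ n ih =>
    have hnorm : ‖Complex.exp (Complex.I * 2 ^ n * t) * (RS n).2 t‖ = ‖(RS n).2 t‖ := by
      have h2 : (Complex.I * 2 ^ n * (t : ℂ)) = ((2 ^ n * t : ℝ) : ℂ) * Complex.I := by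
        push_cast; ring
      rw [norm_mul, h2, Complex.norm_exp_ofReal_mul_I, one_mul]
    have hpar := parallelogram_law_with_norm ℝ ((RS n).1 t)
      (Complex.exp (Complex.I * 2 ^ n * t) * (RS n).2 t)
    rw [hnorm] at hpar
    show ‖(RS n).1 t + _‖ ^ 2 + ‖(RS n).1 t - _‖ ^ 2 = _
    simp only [pow_two] at ih hpar ⊢
    rw [hpar, ih]; ring

lemma integral_exp_int (m : ℤ) :
    (∫ t in (0:ℝ)..(2*Real.pi), Complex.exp (Complex.I * m * t))
      = if m = 0 then (2 * Real.pi : ℂ) else 0 := by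
  split_ifs with h
  · simp [h]
  · have hc : (Complex.I * m) ≠ 0 := by
      simp [Complex.I_ne_zero, h]
    have : ∀ t : ℝ, Complex.exp (Complex.I * m * t) = Complex.exp ((Complex.I * m) * t) := by
      intro t; ring_nf
    rw [intervalIntegral.integral_congr (fun t _ => this t),
      integral_exp_mul_complex hc]
    have h1 : Complex.exp (Complex.I * m * (2 * Real.pi)) = 1 := by
      rw [show (Complex.I * m * (2 * Real.pi) : ℂ) = m * (2 * Real.pi * Complex.I) by ring]
      exact Complex.exp_int_mul_two_pi_mul_I m
    simp [h1]

lemma sum_split (a b : ℕ → ℂ) (n : ℕ) (t : ℝ) :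
    (∑ k ∈ Finset.range (2 ^ (n + 1)),
        (if k < 2 ^ n then a k else b (k - 2 ^ n)) * Complex.exp (Complex.I * k * t))
      = (∑ k ∈ Finset.range (2 ^ n), a k * Complex.exp (Complex.I * k * t))
        + Complex.exp (Complex.I * 2 ^ n * t)
          * ∑ k ∈ Finset.range (2 ^ n), b k * Complex.exp (Complex.I * k * t) := by
  rw [show (2 : ℕ) ^ (n + 1) = 2 ^ n + 2 ^ n from by rw [pow_succ, mul_two],
    Finset.sum_range_add]
  congr 1
  · exact Finset.sum_congr rfl (fun k hk => by rw [if_pos (Finset.mem_range.mp hk)])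
  · rw [Finset.mul_sum]
    refine Finset.sum_congr rfl (fun k hk => ?_)
    have hk' := Finset.mem_range.mp hk
    rw [if_neg (by omega), Nat.add_sub_cancel_left]
    have he : (Complex.I * (↑(2 ^ n + k) : ℂ) * t)
        = Complex.I * 2 ^ n * t + Complex.I * k * t := by push_cast; ring
    rw [he, Complex.exp_add]; ring

lemma RS_coeff (n : ℕ) : ∃ a b : ℕ → ℂ,
    (∀ k < 2 ^ n, (a k = 1 ∨ a k = -1) ∧ (b k = 1 ∨ b k = -1)) ∧
    (∀ t : ℝ, (RS n).1 t = ∑ k ∈ Finset.range (2 ^ n), a k * Complex.exp (Complex.I * k * t)) ∧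
    (∀ t : ℝ, (RS n).2 t = ∑ k ∈ Finset.range (2 ^ n), b k * Complex.exp (Complex.I * k * t)) := by
  induction n with
  | zero =>
    exact ⟨fun _ => 1, fun _ => 1, by simp, by simp [RS], by simp [RS]⟩
  | succ n ih =>
    obtain ⟨a, b, hab, hP, hQ⟩ := ih
    refine ⟨fun k => if k < 2 ^ n then a k else b (k - 2 ^ n),
            fun k => if k < 2 ^ n then a k else (fun j => -b j) (k - 2 ^ n), ?_, ?_, ?_⟩
    · intro k hk
      by_cases h : k < 2 ^ n
      · simp only [if_pos h]
        exact ⟨(hab k h).1, (hab k h).1⟩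
      · simp only [if_neg h]
        have hk' : k - 2 ^ n < 2 ^ n := by
          rw [pow_succ, mul_two] at hk; omega
        refine ⟨(hab _ hk').2, ?_⟩
        rcases (hab _ hk').2 with h1 | h1 <;> simp [h1]
    · intro t
      rw [sum_split a b n t, ← hP t, ← hQ t]
      rfl
    · intro t
      rw [sum_split a (fun j => -b j) n t, ← hP t]
      have : (∑ k ∈ Finset.range (2 ^ n), (-b k) * Complex.exp (Complex.I * k * t))
          = -∑ k ∈ Finset.range (2 ^ n), b k * Complex.exp (Complex.I * k * t) := by
        rw [← Finset.sum_neg_distrib]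
        exact Finset.sum_congr rfl (fun k _ => by ring)
      rw [this, ← hQ t]
      show (RS n).1 t - _ = _
      ring

lemma l2_of_coeffs (N : ℕ) (a : ℕ → ℂ) (ha : ∀ k < N, a k = 1 ∨ a k = -1)
    (f : ℝ → ℂ)
    (hf : ∀ t : ℝ, f t = ∑ k ∈ Finset.range N, a k * Complex.exp (Complex.I * k * t)) :
    (∫ t in (0:ℝ)..(2 * Real.pi), ‖f t‖ ^ 2) = 2 * Real.pi * N := by
  have expand : ∀ t : ℝ, f t * conj (f t)
      = ∑ j ∈ Finset.range N, ∑ k ∈ Finset.range N,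
          (a j * conj (a k)) * Complex.exp (Complex.I * ((((j : ℤ) - (k : ℤ)) : ℤ) : ℂ) * t) := by
    intro t
    rw [hf t, map_sum, Finset.sum_mul_sum]
    refine Finset.sum_congr rfl (fun j _ => Finset.sum_congr rfl (fun k _ => ?_))
    rw [map_mul]
    have hc : conj (Complex.exp (Complex.I * k * t)) = Complex.exp (-(Complex.I * k * t)) := by
      rw [← Complex.exp_conj]
      congr 1
      simp [map_mul, Complex.conj_I, Complex.conj_ofReal]
    rw [hc, mul_mul_mul_comm, ← Complex.exp_add]
    have he : Complex.I * (j : ℂ) * t + -(Complex.I * k * t)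
        = Complex.I * ((((j : ℤ) - (k : ℤ)) : ℤ) : ℂ) * t := by push_cast; ring
    rw [he]
  have key : (∫ t in (0:ℝ)..(2 * Real.pi), f t * conj (f t)) = ((2 * Real.pi * N : ℝ) : ℂ) := by
    rw [intervalIntegral.integral_congr (g := fun t => ∑ j ∈ Finset.range N, ∑ k ∈ Finset.range N,
          (a j * conj (a k)) * Complex.exp (Complex.I * ((((j : ℤ) - (k : ℤ)) : ℤ) : ℂ) * t))
        (fun t _ => expand t)]
    rw [intervalIntegral.integral_finset_sum]
    swap
    · intro j _
      apply Continuous.intervalIntegrable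
      fun_prop
    have : ∀ j ∈ Finset.range N,
        (∫ t in (0:ℝ)..(2 * Real.pi), ∑ k ∈ Finset.range N,
          (a j * conj (a k)) * Complex.exp (Complex.I * ((((j : ℤ) - (k : ℤ)) : ℤ) : ℂ) * t))
        = (2 * Real.pi : ℂ) := by
      intro j hj
      rw [intervalIntegral.integral_finset_sum]
      swap
      · intro k _
        apply Continuous.intervalIntegrable
        fun_prop
      have hterm : ∀ k ∈ Finset.range N,
          (∫ t in (0:ℝ)..(2 * Real.pi),
            (a j * conj (a k)) * Complex.exp (Complex.I * ((((j : ℤ) - (k : ℤ)) : ℤ) : ℂ) * t))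
          = if k = j then (2 * Real.pi : ℂ) else 0 := by
        intro k _
        rw [intervalIntegral.integral_const_mul, integral_exp_int ((j : ℤ) - (k : ℤ))]
        by_cases h : k = j
        · subst h
          rw [if_pos (by ring), if_pos rfl]
          have : a k * conj (a k) = 1 := by
            rcases ha k (Finset.mem_range.mp ‹k ∈ Finset.range N›) with h1 | h1 <;>
              simp [h1]
          rw [this, one_mul]
        · rw [if_neg (by omega), if_neg h, mul_zero]
      rw [Finset.sum_congr rfl hterm, Finset.sum_ite_eq' (Finset.range N) j
        (fun _ => (2 * Real.pi : ℂ)), if_pos hj]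
    rw [Finset.sum_congr rfl this, Finset.sum_const, Finset.card_range]
    push_cast
    ring
  have hre : ∀ t : ℝ, ((‖f t‖ ^ 2 : ℝ) : ℂ) = f t * conj (f t) := by
    intro t
    rw [Complex.mul_conj]
    congr 1
    rw [Complex.sq_norm]
  have := intervalIntegral.integral_ofReal (f := fun t => ‖f t‖ ^ 2)
    (a := (0:ℝ)) (b := 2 * Real.pi) (μ := volume)
  apply Complex.ofReal_injective
  rw [← this, intervalIntegral.integral_congr (fun t _ => hre t), key]

/-- **Proposition 23.** For every `n`, the Rudin–Shapiro polynomial `P_n` has the form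
`P_n(t) = Σ_{k=0}^{2ⁿ-1} a_k e^{ikt}` with `a_k ∈ {-1,1}`; consequently
`‖P_n‖_{L²(𝕋)} = 2^{n/2}` (w.r.t. normalized Lebesgue measure) and
`‖P_n‖_{C(𝕋)} ≤ 2^{(n+1)/2}`. -/
theorem rudinShapiro_props (n : ℕ) :
    (∃ a : ℕ → ℂ, (∀ k < 2 ^ n, a k = 1 ∨ a k = -1) ∧
      ∀ t : ℝ, RSP n t = ∑ k ∈ Finset.range (2 ^ n), a k * Complex.exp (Complex.I * k * t)) ∧
    Real.sqrt ((2 * Real.pi)⁻¹ * ∫ t in (0 : ℝ)..(2 * Real.pi), ‖RSP n t‖ ^ 2)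
      = (2 : ℝ) ^ ((n : ℝ) / 2) ∧
    ∀ t : ℝ, ‖RSP n t‖ ≤ (2 : ℝ) ^ (((n : ℝ) + 1) / 2) := by
  simp only [RSP]
  obtain ⟨a, b, hab, hP, hQ⟩ := RS_coeff n
  have ha : ∀ k < 2 ^ n, a k = 1 ∨ a k = -1 := fun k hk => (hab k hk).1
  have hL2 := l2_of_coeffs (2 ^ n) a ha (RS n).1 hP
  refine ⟨⟨a, ha, hP⟩, ?_, ?_⟩
  · rw [hL2, ← mul_assoc, inv_mul_cancel₀ (by positivity : (2 * Real.pi) ≠ 0), one_mul]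
    rw [show ((2 ^ n : ℕ) : ℝ) = (2 : ℝ) ^ (n : ℕ) by push_cast; ring]
    rw [Real.sqrt_eq_rpow, ← Real.rpow_natCast 2 n, ← Real.rpow_mul (by norm_num : (0:ℝ) ≤ 2)]
    congr 1
    ring
  · intro t
    have hsq := RS_normsq n t
    have h1 : ‖(RS n).1 t‖ ^ 2 ≤ 2 ^ (n + 1) := by nlinarith [sq_nonneg ‖(RS n).2 t‖]
    have h2 : ‖(RS n).1 t‖ ≤ Real.sqrt (2 ^ (n + 1)) := by
      rw [← Real.sqrt_sq (norm_nonneg _)]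
      exact Real.sqrt_le_sqrt h1
    refine h2.trans (le_of_eq ?_)
    rw [Real.sqrt_eq_rpow, ← Real.rpow_natCast 2 (n + 1),
      ← Real.rpow_mul (by norm_num : (0:ℝ) ≤ 2)]
    congr 1
    push_cast
    ring
end
end

section
/- Let (r_k), (m_k), (n_k) be increasing sequences of positive integers and (ε_k) a decreasing sequence of positive reals tending to zero, with associated polynomials w_k(t) = ε_k P_{n_k}(m_k t) e^{i r_k t} + ε_k conj(P_{n_k}(m_k t)) e^{−i r_k t}. Assume r_k > 2·Σ_{j=1}^{k−1} ((2^{n_j} − 1)m_j + r_j) and m_k > 2·Σ_{j=1}^{k−1} ((2^{n_j} − 1)m_j + r_j) for all k ≥ 2, that ε_k·2^{(n_k + 3)/2} < 1 for all k, and that there is a constant c > 0 with ε_k²(2^{n_k + 1} − 1) > c for all k. Then the weak-star limit measure μ = Π_{k=1}^{∞} (1 − w_k) (the weak-star limit of the partial products f_N = Π_{k=1}^{N} (1 − w_k) in M(𝕋)) does not belong to L²(𝕋), i.e. μ is not absolutely continuous with a square-integrable density. -/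
open MeasureTheory Filter Complex Set AddCircle
open scoped Real ComplexConjugate

noncomputable section

/-- The polynomials `w_k(t) = ε_k P_{n_k}(m_k t) e^{i r_k t} + ε_k conj(P_{n_k}(m_k t)) e^{-i r_k t}`. -/
def wpoly (εs : ℕ → ℝ) (rs ms ns : ℕ → ℕ) (k : ℕ) (t : ℝ) : ℂ :=
  (εs k : ℂ) * RSP (ns k) (ms k * t) * Complex.exp (Complex.I * (rs k : ℂ) * t) +
    (εs k : ℂ) * conj (RSP (ns k) (ms k * t)) * Complex.exp (-(Complex.I * (rs k : ℂ) * t))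

/-- The partial products `f_N(t) = Π_{k=1}^N (1 - w_k(t))`. -/
def wprod (εs : ℕ → ℝ) (rs ms ns : ℕ → ℕ) (N : ℕ) (t : ℝ) : ℂ :=
  ∏ k ∈ Finset.Icc 1 N, (1 - wpoly εs rs ms ns k t)

/-- The set `{± Π_{k=1}^m ε_k^{l_k} : l_k ∈ {0,1}, m ∈ ℕ}`. -/
def coefSet (εs : ℕ → ℝ) : Set ℂ :=
  {z | ∃ (m : ℕ) (l : ℕ → ℕ), (∀ i, l i ≤ 1) ∧
    (z = ∏ i ∈ Finset.Icc 1 m, (εs i : ℂ) ^ l i ∨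
     z = -∏ i ∈ Finset.Icc 1 m, (εs i : ℂ) ^ l i)}

namespace RRS


/-- coefficient sequences of the Rudin-Shapiro polynomials -/
def pq : ℕ → (ℕ → ℂ) × (ℕ → ℂ)
  | 0 => (fun j => if j = 0 then 1 else 0, fun j => if j = 0 then 1 else 0)
  | (n + 1) =>
      (fun j => if j < 2 ^ n then (pq n).1 j else (pq n).2 (j - 2 ^ n),
       fun j => if j < 2 ^ n then (pq n).1 j else -((pq n).2 (j - 2 ^ n)))

def pc (n : ℕ) : ℕ → ℂ := (pq n).1

lemma pq_unit (n : ℕ) : ∀ j < 2 ^ n,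
    ((pq n).1 j = 1 ∨ (pq n).1 j = -1) ∧ ((pq n).2 j = 1 ∨ (pq n).2 j = -1) := by
  induction n with
  | zero => intro j hj; interval_cases j <;> simp [pq]
  | succ n ih =>
    intro j hj
    by_cases h : j < 2 ^ n
    · have := ih j h
      simp only [pq, if_pos h]
      exact ⟨this.1, this.1⟩
    · have hj' : j - 2 ^ n < 2 ^ n := by
        have h2 : 2 ^ (n+1) = 2 ^ n + 2 ^ n := by ring
        omega
      have := (ih _ hj').2
      simp only [pq, if_neg h]
      refine ⟨this, ?_⟩
      rcases this with h1 | h1 <;> simp [h1]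

lemma pc_unit (n : ℕ) {j : ℕ} (hj : j < 2 ^ n) : pc n j = 1 ∨ pc n j = -1 :=
  (pq_unit n j hj).1

lemma RS_sum (n : ℕ) (s : ℝ) :
    (RS n).1 s = ∑ j ∈ Finset.range (2 ^ n), (pq n).1 j * Complex.exp (Complex.I * j * s) ∧
    (RS n).2 s = ∑ j ∈ Finset.range (2 ^ n), (pq n).2 j * Complex.exp (Complex.I * j * s) := by
  induction n with
  | zero => simp [RS, pq]
  | succ n ih =>
    have hsplit : ∀ c : ℕ → ℂ,
        ∑ j ∈ Finset.range (2 ^ (n+1)), c j * Complex.exp (Complex.I * j * s)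
          = ∑ j ∈ Finset.range (2 ^ n), c j * Complex.exp (Complex.I * j * s)
            + ∑ j ∈ Finset.range (2 ^ n), c (2 ^ n + j) *
                Complex.exp (Complex.I * (2 ^ n + j : ℕ) * s) := by
      intro c
      have h2 : 2 ^ (n+1) = 2 ^ n + 2 ^ n := by ring
      rw [h2, Finset.sum_range_add]
    have key1 : ∀ j ∈ Finset.range (2 ^ n),
        (pq (n+1)).1 j * Complex.exp (Complex.I * j * s) =
          (pq n).1 j * Complex.exp (Complex.I * j * s) := by
      intro j hj
      simp only [Finset.mem_range] at hj
      simp [pq, if_pos hj]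
    have key1' : ∀ j ∈ Finset.range (2 ^ n),
        (pq (n+1)).2 j * Complex.exp (Complex.I * j * s) =
          (pq n).1 j * Complex.exp (Complex.I * j * s) := by
      intro j hj
      simp only [Finset.mem_range] at hj
      simp [pq, if_pos hj]
    have hexp : ∀ j : ℕ, Complex.exp (Complex.I * (2 ^ n + j : ℕ) * s)
        = Complex.exp (Complex.I * 2 ^ n * s) * Complex.exp (Complex.I * j * s) := by
      intro j
      rw [← Complex.exp_add]
      congr 1
      push_cast
      ring
    constructor
    · show (RS n).1 s + Complex.exp (Complex.I * 2 ^ n * s) * (RS n).2 s = _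
      rw [hsplit, Finset.sum_congr rfl key1, ih.1, ih.2]
      congr 1
      rw [Finset.mul_sum]
      apply Finset.sum_congr rfl
      intro j hj
      simp only [Finset.mem_range] at hj
      have : ¬ (2 ^ n + j < 2 ^ n) := by omega
      simp only [pq, if_neg this, Nat.add_sub_cancel_left, hexp j]
      ring
    · show (RS n).1 s - Complex.exp (Complex.I * 2 ^ n * s) * (RS n).2 s = _
      rw [hsplit, Finset.sum_congr rfl key1', ih.1, ih.2]
      rw [sub_eq_add_neg]
      congr 1
      rw [Finset.mul_sum, ← Finset.sum_neg_distrib]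
      apply Finset.sum_congr rfl
      intro j hj
      simp only [Finset.mem_range] at hj
      have : ¬ (2 ^ n + j < 2 ^ n) := by omega
      simp only [pq, if_neg this, Nat.add_sub_cancel_left, hexp j]
      ring

lemma RSP_sum (n : ℕ) (s : ℝ) :
    RSP n s = ∑ j ∈ Finset.range (2 ^ n), pc n j * Complex.exp (Complex.I * j * s) :=
  (RS_sum n s).1


/-- The monoid hom `n ↦ (t ↦ exp(i n t))`. -/
def expHom : Multiplicative ℤ →* (ℝ → ℂ) where
  toFun n := fun t => Complex.exp (Complex.I * (Multiplicative.toAdd n : ℤ) * t)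
  map_one' := by funext t; simp
  map_mul' a b := by
    funext t
    show Complex.exp _ = Complex.exp _ * Complex.exp _
    rw [← Complex.exp_add]
    congr 1
    have : Multiplicative.toAdd (a * b) = Multiplicative.toAdd a + Multiplicative.toAdd b := rfl
    rw [this]
    push_cast
    ring

/-- evaluation of a formal trigonometric polynomial -/
def Φ : AddMonoidAlgebra ℂ ℤ →ₐ[ℂ] (ℝ → ℂ) :=
  AddMonoidAlgebra.lift ℂ (ℝ → ℂ) ℤ expHom

lemma Φ_apply (c : AddMonoidAlgebra ℂ ℤ) (t : ℝ) :
    Φ c t = ∑ a ∈ c.coeff.support, c.coeff a * Complex.exp (Complex.I * a * t) := by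
  rw [Φ, AddMonoidAlgebra.lift_apply]
  rw [Finsupp.sum]
  rw [Finset.sum_apply]
  apply Finset.sum_congr rfl
  intro a _
  simp only [smul_eq_mul, expHom, MonoidHom.coe_mk, OneHom.coe_mk]
  rfl

lemma exp_int_integral (d : ℤ) :
    ∫ t in (0:ℝ)..(2 * Real.pi), Complex.exp (Complex.I * d * t)
      = if d = 0 then (2 * Real.pi : ℂ) else 0 := by
  rcases eq_or_ne d 0 with h | h
  · simp [h]
  · rw [if_neg h]
    have hc : (Complex.I * d) ≠ 0 := by
      simp [Complex.I_ne_zero, h]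
    have := integral_exp_mul_complex (a := (0:ℝ)) (b := 2 * Real.pi) hc
    have heq : ∀ t : ℝ, Complex.I * d * t = Complex.I * d * (t : ℂ) := fun t => rfl
    rw [this]
    have h1 : Complex.I * (d : ℂ) * ((2 : ℝ) * Real.pi : ℝ) = (d : ℤ) * (2 * (Real.pi : ℂ) * Complex.I) := by
      push_cast; ring
    rw [h1, Complex.exp_int_mul_two_pi_mul_I]
    simp


lemma Φ_single (a : ℤ) (b : ℂ) (t : ℝ) :
    Φ (AddMonoidAlgebra.single a b) t = b * Complex.exp (Complex.I * a * t) := by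
  rw [Φ]
  rw [AddMonoidAlgebra.lift_single]
  rfl


lemma coeff_integral (c : AddMonoidAlgebra ℂ ℤ) (ν : ℤ) :
    ∫ t in (0:ℝ)..(2 * Real.pi), Complex.exp (-(Complex.I * ν * t)) * Φ c t
      = (2 * Real.pi : ℝ) * c.coeff ν := by
  have hint : ∀ a : ℤ, IntervalIntegrable
      (fun t : ℝ => Complex.exp (-(Complex.I * ν * t)) * (c.coeff a * Complex.exp (Complex.I * a * t)))
      MeasureTheory.volume 0 (2 * Real.pi) := by
    intro a
    apply Continuous.intervalIntegrable
    continuity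
  calc ∫ t in (0:ℝ)..(2 * Real.pi), Complex.exp (-(Complex.I * ν * t)) * Φ c t
      = ∫ t in (0:ℝ)..(2 * Real.pi), ∑ a ∈ c.coeff.support,
          Complex.exp (-(Complex.I * ν * t)) * (c.coeff a * Complex.exp (Complex.I * a * t)) := by
        apply intervalIntegral.integral_congr
        intro t _
        show Complex.exp _ * Φ c t = _
        rw [Φ_apply, Finset.mul_sum]
    _ = ∑ a ∈ c.coeff.support, ∫ t in (0:ℝ)..(2 * Real.pi),
          Complex.exp (-(Complex.I * ν * t)) * (c.coeff a * Complex.exp (Complex.I * a * t)) := by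
        exact intervalIntegral.integral_finset_sum (fun a _ => hint a)
    _ = ∑ a ∈ c.coeff.support, c.coeff a * (if ((a : ℤ) - ν) = 0 then (2 * Real.pi : ℂ) else 0) := by
        apply Finset.sum_congr rfl
        intro a _
        rw [← exp_int_integral (a - ν)]
        rw [← intervalIntegral.integral_const_mul]
        apply intervalIntegral.integral_congr
        intro t _
        show Complex.exp (-(Complex.I * ν * t)) * (c.coeff a * Complex.exp (Complex.I * a * t))
          = c.coeff a * Complex.exp (Complex.I * ((a : ℤ) - ν : ℤ) * t)
        rw [mul_comm (Complex.exp _), mul_assoc, ← Complex.exp_add]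
        congr 2
        push_cast
        ring
    _ = (2 * Real.pi : ℝ) * c.coeff ν := by
        rcases Finset.decidableMem ν c.coeff.support with h | h
        · have h0 : c.coeff ν = 0 := Finsupp.notMem_support_iff.mp h
          rw [h0]
          rw [Finset.sum_eq_zero]
          · simp
          intro a ha
          have : ¬ ((a : ℤ) - ν = 0) := by
            intro hh
            apply h
            have : a = ν := by omega
            rwa [this] at ha
          simp [this]
        · rw [Finset.sum_eq_single_of_mem ν h]
          · simp [mul_comm]
          intro a ha hne
          have : ¬ ((a : ℤ) - ν = 0) := by omega
          simp [this]

variable (εs : ℕ → ℝ) (rs ms ns : ℕ → ℕ)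

/-- the frequency `r_k + j m_k` -/
def wnu (k j : ℕ) : ℤ := (rs k : ℤ) + j * ms k

/-- formal coefficients of `w_k` -/
def wcF (k : ℕ) : AddMonoidAlgebra ℂ ℤ :=
  ∑ j ∈ Finset.range (2 ^ ns k),
    (AddMonoidAlgebra.single (wnu rs ms k j) ((εs k : ℂ) * pc (ns k) j)
      + AddMonoidAlgebra.single (-(wnu rs ms k j)) ((εs k : ℂ) * pc (ns k) j))

lemma Φ_wcF (k : ℕ) (t : ℝ) : Φ (wcF εs rs ms ns k) t = wpoly εs rs ms ns k t := by
  have hA : Φ (wcF εs rs ms ns k) t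
      = ∑ j ∈ Finset.range (2 ^ ns k),
          ((εs k : ℂ) * pc (ns k) j * Complex.exp (Complex.I * ((wnu rs ms k j : ℤ) : ℂ) * t)
           + (εs k : ℂ) * pc (ns k) j *
              Complex.exp (Complex.I * ((-(wnu rs ms k j) : ℤ) : ℂ) * t)) := by
    rw [wcF, map_sum, Finset.sum_apply]
    refine Finset.sum_congr rfl fun j _ => ?_
    rw [map_add, Pi.add_apply, Φ_single, Φ_single]
  have hP : RSP (ns k) ((ms k : ℝ) * t)
      = ∑ j ∈ Finset.range (2 ^ ns k),
          pc (ns k) j * Complex.exp (Complex.I * j * (((ms k : ℝ) * t : ℝ) : ℂ)) :=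
    RSP_sum _ _
  have hPc : conj (RSP (ns k) ((ms k : ℝ) * t))
      = ∑ j ∈ Finset.range (2 ^ ns k),
          pc (ns k) j * Complex.exp (-(Complex.I * j * (((ms k : ℝ) * t : ℝ) : ℂ))) := by
    rw [hP, map_sum]
    refine Finset.sum_congr rfl fun j hj => ?_
    rw [map_mul, ← Complex.exp_conj]
    have h1 : (starRingEnd ℂ) (pc (ns k) j) = pc (ns k) j := by
      rcases pc_unit (ns k) (Finset.mem_range.mp hj) with h | h <;> simp [h]
    rw [h1]
    congr 1
    simp only [map_mul, Complex.conj_I, Complex.conj_ofReal, Complex.conj_natCast]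
    ring
  rw [hA, wpoly, hPc, hP, Finset.mul_sum, Finset.mul_sum, Finset.sum_mul, Finset.sum_mul,
    ← Finset.sum_add_distrib]
  refine Finset.sum_congr rfl fun j _ => ?_
  have e1 : Complex.I * ((wnu rs ms k j : ℤ) : ℂ) * t
      = Complex.I * (j : ℂ) * (((ms k : ℝ) * t : ℝ) : ℂ) + Complex.I * (rs k : ℂ) * t := by
    simp only [wnu]
    push_cast
    ring
  have e2 : Complex.I * ((-(wnu rs ms k j) : ℤ) : ℂ) * t
      = -(Complex.I * (j : ℂ) * (((ms k : ℝ) * t : ℝ) : ℂ)) + -(Complex.I * (rs k : ℂ) * t) := by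
    simp only [wnu]
    push_cast
    ring
  rw [e1, e2, Complex.exp_add, Complex.exp_add]
  ring

/-- membership in the possible frequency set of `w_k` -/
def Dmem (k : ℕ) (x : ℤ) : Prop :=
  ∃ j : ℕ, j < 2 ^ ns k ∧ (x = wnu rs ms k j ∨ x = -wnu rs ms k j)

lemma support_wcF {k : ℕ} {x : ℤ} (hx : x ∈ (wcF εs rs ms ns k).coeff.support) :
    Dmem rs ms ns k x := by
  rw [wcF, AddMonoidAlgebra.coeff_sum] at hx
  obtain ⟨j, hj, hxj⟩ := Finsupp.mem_support_finset_sum x hx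
  have hsub := Finsupp.support_add (g₁ := Finsupp.single (wnu rs ms k j) ((εs k : ℂ) * pc (ns k) j))
    (g₂ := Finsupp.single (-(wnu rs ms k j)) ((εs k : ℂ) * pc (ns k) j)) hxj
  rw [Finset.mem_union] at hsub
  refine ⟨j, Finset.mem_range.mp hj, ?_⟩
  rcases hsub with h | h
  · exact Or.inl (Finset.mem_singleton.mp (Finsupp.support_single_subset h))
  · exact Or.inr (Finset.mem_singleton.mp (Finsupp.support_single_subset h))

lemma support_prod (S : Finset ℕ) :
    ∀ x ∈ (∏ i ∈ S, (-(wcF εs rs ms ns i))).coeff.support,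
    ∃ f : ℕ → ℤ, (∀ i ∈ S, Dmem rs ms ns i (f i)) ∧ x = ∑ i ∈ S, f i := by
  classical
  induction S using Finset.induction_on with
  | empty =>
    intro x hx
    refine ⟨fun _ => 0, by simp, ?_⟩
    rw [Finset.prod_empty] at hx
    rw [AddMonoidAlgebra.one_def, AddMonoidAlgebra.coeff_single] at hx
    have := Finsupp.support_single_subset hx
    simp only [Finset.mem_singleton] at this
    simpa [this]
  | @insert a S ha ih =>
    intro x hx
    rw [Finset.prod_insert ha] at hx
    have hx2 := AddMonoidAlgebra.support_coeff_mul_subset _ _ hx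
    rw [Finset.mem_add] at hx2
    obtain ⟨y, hy, z, hz, hyz⟩ := hx2
    rw [AddMonoidAlgebra.coeff_neg, Finsupp.support_neg] at hy
    obtain ⟨f, hf, hzf⟩ := ih z hz
    refine ⟨Function.update f a y, ?_, ?_⟩
    · intro i hi
      rcases Finset.mem_insert.mp hi with rfl | hmem
      · rw [Function.update_self]
        exact support_wcF εs rs ms ns hy
      · rw [Function.update_of_ne (by rintro rfl; exact ha hmem)]
        exact hf i hmem
    · rw [Finset.sum_insert ha, Function.update_self, ← hyz, hzf]
      congr 1
      refine Finset.sum_congr rfl fun i hi => ?_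
      rw [Function.update_of_ne (by rintro rfl; exact ha hi)]

/-- `L_i = (2^{n_i}-1) m_i + r_i` as an integer. -/
def Lb (i : ℕ) : ℤ := ((2:ℤ) ^ ns i - 1) * ms i + rs i

/-- `T_k = ∑_{j=1}^{k-1} L_j`. -/
def Tb (k : ℕ) : ℤ := ∑ j ∈ Finset.Icc 1 (k-1), Lb rs ms ns j

lemma Lb_nonneg (i : ℕ) : 0 ≤ Lb rs ms ns i := by
  have h1 : (1:ℤ) ≤ 2 ^ ns i := one_le_pow₀ (by norm_num)
  have h2 : (0:ℤ) ≤ ms i := Int.natCast_nonneg _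
  have h3 : (0:ℤ) ≤ rs i := Int.natCast_nonneg _
  simp only [Lb]
  nlinarith

lemma Tb_nonneg (k : ℕ) : 0 ≤ Tb rs ms ns k :=
  Finset.sum_nonneg fun i _ => Lb_nonneg rs ms ns i

lemma Dmem_abs {k : ℕ} {x : ℤ} (h : Dmem rs ms ns k x) :
    (rs k : ℤ) ≤ |x| ∧ |x| ≤ Lb rs ms ns k := by
  obtain ⟨j, hj, hx⟩ := h
  have hν : (0:ℤ) ≤ wnu rs ms k j := by
    have : (0:ℤ) ≤ (j:ℤ) * ms k := by positivity
    have : (0:ℤ) ≤ (rs k : ℤ) := Int.natCast_nonneg _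
    simp only [wnu]; omega
  have habs : |x| = wnu rs ms k j := by
    rcases hx with rfl | rfl
    · exact abs_of_nonneg hν
    · rw [abs_neg]; exact abs_of_nonneg hν
  rw [habs]
  constructor
  · have : (0:ℤ) ≤ (j:ℤ) * ms k := by positivity
    simp only [wnu]; omega
  · simp only [wnu, Lb]
    have hj' : (j:ℤ) ≤ (2:ℤ) ^ ns k - 1 := by
      have : (j:ℤ) < (2:ℤ) ^ ns k := by
        calc (j:ℤ) < ((2 ^ ns k : ℕ) : ℤ) := by exact_mod_cast hj
        _ = (2:ℤ) ^ ns k := by push_cast; ring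
      omega
    have : (j:ℤ) * ms k ≤ ((2:ℤ) ^ ns k - 1) * ms k :=
      mul_le_mul_of_nonneg_right hj' (Int.natCast_nonneg _)
    omega

lemma sum_abs_le (S : Finset ℕ) (f : ℕ → ℤ) (hf : ∀ i ∈ S, Dmem rs ms ns i (f i)) :
    |∑ i ∈ S, f i| ≤ ∑ i ∈ S, Lb rs ms ns i :=
  (Finset.abs_sum_le_sum_abs _ _).trans
    (Finset.sum_le_sum fun i hi => (Dmem_abs rs ms ns (hf i hi)).2)

lemma erase_subset_Icc {S : Finset ℕ} (hS1 : ∀ i ∈ S, 1 ≤ i) {K : ℕ}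
    (hK : ∀ i ∈ S, i ≤ K) : S.erase K ⊆ Finset.Icc 1 (K - 1) := by
  intro i hi
  have h1 := Finset.mem_of_mem_erase hi
  have h2 := Finset.ne_of_mem_erase hi
  have := hS1 i h1
  have := hK i h1
  rw [Finset.mem_Icc]
  omega

lemma sum_lower (S : Finset ℕ) (hS : S.Nonempty) (hS1 : ∀ i ∈ S, 1 ≤ i)
    (f : ℕ → ℤ) (hf : ∀ i ∈ S, Dmem rs ms ns i (f i)) :
    (rs (S.max' hS) : ℤ) - Tb rs ms ns (S.max' hS) ≤ |∑ i ∈ S, f i| := by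
  set K := S.max' hS with hKdef
  have hKmem : K ∈ S := S.max'_mem hS
  have hsplit : f K + ∑ i ∈ S.erase K, f i = ∑ i ∈ S, f i :=
    Finset.add_sum_erase S f hKmem
  have h1 : |∑ i ∈ S.erase K, f i| ≤ Tb rs ms ns K := by
    refine (sum_abs_le rs ms ns _ f fun i hi => hf i (Finset.mem_of_mem_erase hi)).trans ?_
    exact Finset.sum_le_sum_of_subset_of_nonneg
      (erase_subset_Icc hS1 fun i hi => S.le_max' i hi)
      (fun i _ _ => Lb_nonneg rs ms ns i)
  have h2 : (rs K : ℤ) ≤ |f K| := (Dmem_abs rs ms ns (hf K hKmem)).1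
  have h3 : |f K| = |(∑ i ∈ S, f i) - ∑ i ∈ S.erase K, f i| := by rw [← hsplit]; ring_nf
  have h4 : |(∑ i ∈ S, f i) - ∑ i ∈ S.erase K, f i| ≤ |∑ i ∈ S, f i| + |∑ i ∈ S.erase K, f i| :=
    abs_sub _ _
  linarith


lemma Tb_pos_lower (S : Finset ℕ) (hS : S.Nonempty) (hS1 : ∀ i ∈ S, 1 ≤ i)
    (hrpos : ∀ k, 0 < rs k)
    (hgr : ∀ K, 2 ≤ K → 2 * Tb rs ms ns K < rs K)
    (f : ℕ → ℤ) (hf : ∀ i ∈ S, Dmem rs ms ns i (f i)) :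
    Tb rs ms ns (S.max' hS) < |∑ i ∈ S, f i| := by
  set K := S.max' hS with hKdef
  have hlow := sum_lower rs ms ns S hS hS1 f hf
  have hK1 : 1 ≤ K := hS1 _ (S.max'_mem hS)
  rcases eq_or_lt_of_le hK1 with h1 | h2
  · have hT : Tb rs ms ns K = 0 := by
      rw [Tb, ← h1]
      simp
    have := hrpos K
    rw [hT] at hlow ⊢
    have : (0:ℤ) < rs K := by exact_mod_cast this
    linarith
  · have := hgr K h2
    linarith

lemma freq_unique (N : ℕ) (S : Finset ℕ) (hSN : S ⊆ Finset.Icc 1 N)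
    (hrpos : ∀ k, 0 < rs k) (hmpos : ∀ k, 0 < ms k)
    (hgr : ∀ K, 2 ≤ K → 2 * Tb rs ms ns K < rs K)
    (hgm : ∀ K, 2 ≤ K → 2 * Tb rs ms ns K < ms K)
    (f : ℕ → ℤ) (hf : ∀ i ∈ S, Dmem rs ms ns i (f i))
    (k j : ℕ) (hk : 1 ≤ k) (hj : j < 2 ^ ns k)
    (hsum : ∑ i ∈ S, f i = wnu rs ms k j) : S = {k} := by
  have hS1 : ∀ i ∈ S, 1 ≤ i := fun i hi => (Finset.mem_Icc.mp (hSN hi)).1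
  have hν : Dmem rs ms ns k (wnu rs ms k j) := ⟨j, hj, Or.inl rfl⟩
  have hνabs := Dmem_abs rs ms ns hν
  have hνnn : (0:ℤ) ≤ wnu rs ms k j := by
    have : (0:ℤ) ≤ (j:ℤ) * ms k := by positivity
    have : (0:ℤ) ≤ (rs k:ℤ) := Int.natCast_nonneg _
    simp only [wnu] at *
    omega
  rw [abs_of_nonneg hνnn] at hνabs
  have hνpos : (0:ℤ) < wnu rs ms k j := by
    have := hrpos k
    have : (1:ℤ) ≤ (rs k:ℤ) := by exact_mod_cast this
    linarith [hνabs.1]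
  rcases Finset.eq_empty_or_nonempty S with rfl | hS
  · simp at hsum
    omega
  set K := S.max' hS with hKdef
  have hKmem : K ∈ S := S.max'_mem hS
  have hK1 : 1 ≤ K := hS1 _ hKmem
  have habs : |∑ i ∈ S, f i| = wnu rs ms k j := by rw [hsum, abs_of_nonneg hνnn]
  rcases lt_trichotomy K k with hlt | heq | hgt
  · -- K < k : sum too small
    exfalso
    have hk2 : 2 ≤ k := by omega
    have hup : |∑ i ∈ S, f i| ≤ Tb rs ms ns k := by
      refine (sum_abs_le rs ms ns S f hf).trans ?_
      refine Finset.sum_le_sum_of_subset_of_nonneg ?_ (fun i _ _ => Lb_nonneg rs ms ns i)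
      intro i hi
      have := hS1 i hi
      have := S.le_max' i hi
      rw [Finset.mem_Icc]
      omega
    have := hgr k hk2
    have hTnn := Tb_nonneg rs ms ns k
    rw [habs] at hup
    linarith [hνabs.1]
  · -- K = k
    subst heq
    rcases Finset.eq_empty_or_nonempty (S.erase K) with herase | herase
    · -- S = {K}
      apply Finset.eq_singleton_iff_unique_mem.mpr
      refine ⟨hKmem, fun i hi => ?_⟩
      by_contra hne
      exact Finset.notMem_empty i (herase ▸ Finset.mem_erase.mpr ⟨hne, hi⟩)
    · exfalso
      -- K ≥ 2
      have hK2 : 2 ≤ K := by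
        obtain ⟨i, hi⟩ := herase
        have h1 := hS1 i (Finset.mem_of_mem_erase hi)
        have h2 := Finset.ne_of_mem_erase hi
        have h3 := S.le_max' i (Finset.mem_of_mem_erase hi)
        omega
      have hrest1 : |∑ i ∈ S.erase K, f i| ≤ Tb rs ms ns K := by
        refine (sum_abs_le rs ms ns _ f fun i hi => hf i (Finset.mem_of_mem_erase hi)).trans ?_
        exact Finset.sum_le_sum_of_subset_of_nonneg
          (erase_subset_Icc hS1 fun i hi => S.le_max' i hi)
          (fun i _ _ => Lb_nonneg rs ms ns i)
      have hrest0 : 0 < |∑ i ∈ S.erase K, f i| := by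
        have := Tb_pos_lower rs ms ns (S.erase K) herase
          (fun i hi => hS1 i (Finset.mem_of_mem_erase hi)) hrpos hgr f
          (fun i hi => hf i (Finset.mem_of_mem_erase hi))
        have := Tb_nonneg rs ms ns ((S.erase K).max' herase)
        linarith
      have hsplit : f K + ∑ i ∈ S.erase K, f i = ∑ i ∈ S, f i :=
        Finset.add_sum_erase S f hKmem
      obtain ⟨j', hj', hfK⟩ := hf K hKmem
      have hgrK := hgr K hK2
      have hgmK := hgm K hK2
      set rest := ∑ i ∈ S.erase K, f i with hrest
      have hmKpos : (0:ℤ) < ms K := by exact_mod_cast hmpos K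
      rcases hfK with hfK | hfK
      · -- f K = wnu K j'
        have : (j:ℤ) * ms K - (j':ℤ) * ms K = rest := by
          rw [hfK] at hsplit
          rw [hsum] at hsplit
          simp only [wnu] at hsplit ⊢
          linarith
        have hfactor : ((j:ℤ) - j') * ms K = rest := by linarith [this]
        have hjne : (j:ℤ) ≠ j' := by
          intro hh
          rw [hh] at hfactor
          simp at hfactor
          rw [← hfactor] at hrest0
          simp at hrest0
        have : (ms K : ℤ) ≤ |rest| := by
          rw [← hfactor, abs_mul, abs_of_nonneg hmKpos.le]
          have h1 : (1:ℤ) ≤ |(j:ℤ) - j'| := by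
            rcases lt_or_gt_of_ne hjne with h | h
            · rw [abs_of_neg (by linarith)]; omega
            · rw [abs_of_pos (by linarith)]; omega
          nlinarith
        linarith
      · -- f K = -wnu K j'
        have hwn : (0:ℤ) ≤ (j':ℤ) * ms K := by positivity
        have : ∑ i ∈ S, f i < 0 := by
          rw [← hsplit, hfK]
          simp only [wnu]
          have : rest ≤ |rest| := le_abs_self _
          have hTnn := Tb_nonneg rs ms ns K
          have : (rs K : ℤ) ≤ (rs K : ℤ) + j' * ms K := by linarith
          linarith
        omega
  · -- K > k : sum too big
    exfalso
    have hK2 : 2 ≤ K := by omega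
    have hlow := Tb_pos_lower rs ms ns S hS hS1 hrpos hgr f hf
    have hup : wnu rs ms k j ≤ Tb rs ms ns K := by
      refine le_trans hνabs.2 ?_
      refine Finset.single_le_sum (f := fun i => Lb rs ms ns i)
        (fun i _ => Lb_nonneg rs ms ns i) ?_
      rw [Finset.mem_Icc]
      omega
    rw [habs] at hlow
    linarith


/-- formal coefficients of the partial products -/
def cF (N : ℕ) : AddMonoidAlgebra ℂ ℤ := ∏ k ∈ Finset.Icc 1 N, (1 - wcF εs rs ms ns k)

lemma wnu_pos (hrpos : ∀ k, 0 < rs k) (k j : ℕ) : (0:ℤ) < wnu rs ms k j := by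
  have h1 : (0:ℤ) < (rs k : ℤ) := by exact_mod_cast hrpos k
  have h2 : (0:ℤ) ≤ (j:ℤ) * ms k := by positivity
  simp only [wnu]; omega

lemma wcF_apply_nu (hrpos : ∀ k, 0 < rs k) (hmpos : ∀ k, 0 < ms k)
    (k j : ℕ) (hj : j < 2 ^ ns k) :
    (wcF εs rs ms ns k).coeff (wnu rs ms k j) = (εs k : ℂ) * pc (ns k) j := by
  rw [wcF, AddMonoidAlgebra.coeff_sum, Finsupp.finset_sum_apply]
  rw [Finset.sum_eq_single_of_mem j (Finset.mem_range.mpr hj)]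
  · rw [AddMonoidAlgebra.coeff_add, AddMonoidAlgebra.coeff_single, AddMonoidAlgebra.coeff_single,
      Finsupp.add_apply, Finsupp.single_apply, Finsupp.single_apply,
      if_pos rfl, if_neg, add_zero]
    have h1 := wnu_pos rs ms hrpos k j
    omega
  · intro j' _ hne
    rw [AddMonoidAlgebra.coeff_add, AddMonoidAlgebra.coeff_single, AddMonoidAlgebra.coeff_single,
      Finsupp.add_apply, Finsupp.single_apply, Finsupp.single_apply, if_neg, if_neg, add_zero]
    · have h1 := wnu_pos rs ms hrpos k j
      have h2 := wnu_pos rs ms hrpos k j'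
      omega
    · intro hh
      apply hne
      simp only [wnu] at hh
      have hm : (0:ℤ) < ms k := by exact_mod_cast hmpos k
      have hjj : (j':ℤ) * ms k = (j:ℤ) * ms k := by linarith
      have : (j':ℤ) = j := mul_right_cancel₀ (ne_of_gt hm) hjj
      exact_mod_cast this

lemma cF_apply (N : ℕ)
    (hrpos : ∀ k, 0 < rs k) (hmpos : ∀ k, 0 < ms k)
    (hgr : ∀ K, 2 ≤ K → 2 * Tb rs ms ns K < rs K)
    (hgm : ∀ K, 2 ≤ K → 2 * Tb rs ms ns K < ms K)
    (k j : ℕ) (hk : 1 ≤ k) (hkN : k ≤ N) (hj : j < 2 ^ ns k) :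
    (cF εs rs ms ns N).coeff (wnu rs ms k j) = -((εs k : ℂ) * pc (ns k) j) := by
  classical
  have hmem : {k} ∈ (Finset.Icc 1 N).powerset := by
    rw [Finset.mem_powerset, Finset.singleton_subset_iff, Finset.mem_Icc]
    omega
  have hexp : cF εs rs ms ns N
      = ∑ S ∈ (Finset.Icc 1 N).powerset, ∏ i ∈ S, -(wcF εs rs ms ns i) := by
    rw [cF]
    have hcongr : ∀ i ∈ Finset.Icc 1 N,
        (1 - wcF εs rs ms ns i) = (-(wcF εs rs ms ns i) + 1) := by
      intro i _; ring
    rw [Finset.prod_congr rfl hcongr, Finset.prod_add]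
    simp
  rw [hexp, AddMonoidAlgebra.coeff_sum, Finsupp.finset_sum_apply]
  rw [Finset.sum_eq_single_of_mem {k} hmem]
  · rw [Finset.prod_singleton, AddMonoidAlgebra.coeff_neg, Finsupp.neg_apply,
      wcF_apply_nu εs rs ms ns hrpos hmpos k j hj]
  · intro S hS hne
    by_contra h0
    have hsupp : wnu rs ms k j ∈ (∏ i ∈ S, -(wcF εs rs ms ns i)).coeff.support :=
      Finsupp.mem_support_iff.mpr h0
    obtain ⟨f, hf, hxf⟩ := support_prod εs rs ms ns S _ hsupp
    exact hne (freq_unique rs ms ns N S (Finset.mem_powerset.mp hS) hrpos hmpos hgr hgm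
      f hf k j hk hj hxf.symm)


lemma Φ_cF (N : ℕ) (t : ℝ) : Φ (cF εs rs ms ns N) t = wprod εs rs ms ns N t := by
  rw [cF, map_prod, wprod, Finset.prod_apply]
  refine Finset.prod_congr rfl fun k _ => ?_
  rw [map_sub, map_one, Pi.sub_apply, Pi.one_apply, Φ_wcF]


end RRS

/-- **Proposition 28.** Under the lacunarity conditions on `(r_k)` and `(m_k)`, the bound
`ε_k 2^{(n_k+3)/2} < 1`, and `ε_k²(2^{n_k+1} - 1) > c > 0`, the weak-star limit measure
`μ = Π_{k=1}^∞ (1 - w_k)` of the partial products does not belong to `L²(𝕋)`. -/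
theorem riesz_rudin_shapiro_not_L2 (εs : ℕ → ℝ) (rs ms ns : ℕ → ℕ)
    (hr : StrictMono rs) (hm : StrictMono ms) (hn : StrictMono ns)
    (hrpos : ∀ k, 0 < rs k) (hmpos : ∀ k, 0 < ms k) (hnpos : ∀ k, 0 < ns k)
    (hεanti : StrictAnti εs) (hεpos : ∀ k, 0 < εs k)
    (hεlim : Tendsto εs atTop (nhds 0))
    (hgapr : ∀ k, 2 ≤ k →
      2 * ∑ j ∈ Finset.Icc 1 (k - 1), ((2 ^ ns j - 1) * ms j + rs j) < rs k)
    (hgapm : ∀ k, 2 ≤ k →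
      2 * ∑ j ∈ Finset.Icc 1 (k - 1), ((2 ^ ns j - 1) * ms j + rs j) < ms k)
    (hsmall : ∀ k, 1 ≤ k → εs k * (2 : ℝ) ^ (((ns k : ℝ) + 3) / 2) < 1)
    (hbig : ∃ c : ℝ, 0 < c ∧ ∀ k, 1 ≤ k → c < εs k ^ 2 * ((2 : ℝ) ^ (ns k + 1) - 1))
    (μ : Measure Circ) (hfin : IsFiniteMeasure μ)
    (hlim : ∀ g : C(Circ, ℂ),
      Tendsto (fun N => (2 * Real.pi)⁻¹ •
          ∫ t in (0 : ℝ)..(2 * Real.pi), g (t : ℝ) * wprod εs rs ms ns N t)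
        atTop (nhds (∫ x, g x ∂μ))) :
    ¬ ∃ h : Circ → ℝ, (∀ x, 0 ≤ h x) ∧ MemLp h 2 (haarAddCircle : Measure Circ) ∧
        μ = (haarAddCircle : Measure Circ).withDensity fun x => ENNReal.ofReal (h x) := by
  classical
  rintro ⟨h, hpos, hmem, hrepr⟩
  obtain ⟨c, hc, hcbig⟩ := hbig
  -- integer gap bounds
  have hcast : ∀ K : ℕ,
      ((∑ j ∈ Finset.Icc 1 (K-1), ((2 ^ ns j - 1) * ms j + rs j) : ℕ) : ℤ)
        = RRS.Tb rs ms ns K := by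
    intro K
    rw [RRS.Tb, Nat.cast_sum]
    refine Finset.sum_congr rfl fun i _ => ?_
    rw [RRS.Lb]
    have h1 : 1 ≤ 2 ^ ns i := Nat.one_le_two_pow
    rw [Nat.cast_add, Nat.cast_mul, Nat.cast_sub h1]
    push_cast
    ring
  have hgr : ∀ K, 2 ≤ K → 2 * RRS.Tb rs ms ns K < rs K := by
    intro K hK
    rw [← hcast K]
    exact_mod_cast hgapr K hK
  have hgm : ∀ K, 2 ≤ K → 2 * RRS.Tb rs ms ns K < ms K := by
    intro K hK
    rw [← hcast K]
    exact_mod_cast hgapm K hK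
  have hπ : (0:ℝ) < 2 * Real.pi := by positivity
  -- the complex-valued density
  set hℂ : Circ → ℂ := fun x => (h x : ℂ) with hhℂ
  have hmemℂ : MemLp hℂ 2 (haarAddCircle : Measure Circ) := hmem.ofReal
  -- Step 1 : Fourier coefficients of μ at the block frequencies
  have hmeasNN : AEMeasurable (fun x => (h x).toNNReal) (haarAddCircle : Measure Circ) :=
    measurable_real_toNNReal.comp_aemeasurable hmem.aestronglyMeasurable.aemeasurable
  have hcoeff : ∀ k j : ℕ, 1 ≤ k → j < 2 ^ ns k →
      fourierCoeff hℂ (RRS.wnu rs ms k j) = -((εs k : ℂ) * RRS.pc (ns k) j) := by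
    intro k j hk hj
    set ν : ℤ := RRS.wnu rs ms k j with hν
    set g : C(Circ, ℂ) := fourier (-ν) with hg
    -- the approximating integrals are eventually constant
    have hev : ∀ N, k ≤ N → (2 * Real.pi)⁻¹ •
        (∫ t in (0:ℝ)..(2 * Real.pi), g (t : ℝ) * wprod εs rs ms ns N t)
          = -((εs k : ℂ) * RRS.pc (ns k) j) := by
      intro N hN
      have hgt : ∀ t : ℝ, g (t : ℝ) = Complex.exp (-(Complex.I * (ν : ℂ) * t)) := by
        intro t
        rw [hg]
        show fourier (-ν) ((t : ℝ) : Circ) = _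
        rw [fourier_coe_apply]
        congr 1
        have hπ' : (Real.pi : ℂ) ≠ 0 := by exact_mod_cast Real.pi_ne_zero
        push_cast
        field_simp
      have hint : (∫ t in (0:ℝ)..(2 * Real.pi), g (t : ℝ) * wprod εs rs ms ns N t)
          = (2 * Real.pi : ℝ) * ((RRS.cF εs rs ms ns N).coeff ν) := by
        rw [← RRS.coeff_integral (RRS.cF εs rs ms ns N) ν]
        refine intervalIntegral.integral_congr fun t _ => ?_
        rw [hgt t, RRS.Φ_cF]
      rw [hint, RRS.cF_apply εs rs ms ns N hrpos hmpos hgr hgm k j hk hN hj]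
      rw [Complex.real_smul]
      push_cast
      rw [← mul_assoc, ← mul_neg]
      rw [inv_mul_cancel₀ (mul_ne_zero two_ne_zero (Complex.ofReal_ne_zero.mpr Real.pi_ne_zero)), one_mul]
    have hlim1 : Tendsto (fun N => (2 * Real.pi)⁻¹ •
        (∫ t in (0:ℝ)..(2 * Real.pi), g (t : ℝ) * wprod εs rs ms ns N t)) atTop
        (nhds (-((εs k : ℂ) * RRS.pc (ns k) j))) := by
      refine Tendsto.congr' ?_ tendsto_const_nhds
      filter_upwards [eventually_ge_atTop k] with N hN
      exact (hev N hN).symm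
    have hμg : ∫ x, g x ∂μ = -((εs k : ℂ) * RRS.pc (ns k) j) :=
      tendsto_nhds_unique (hlim g) hlim1
    -- compute the same integral via the density
    rw [hrepr] at hμg
    have hd : (fun x : Circ => ENNReal.ofReal (h x))
        = fun x : Circ => (((h x).toNNReal) : ENNReal) := rfl
    rw [hd, integral_withDensity_eq_integral_smul₀ hmeasNN] at hμg
    rw [← hμg, fourierCoeff]
    refine integral_congr_ae (Filter.EventuallyEq.of_eq (funext fun x => ?_))
    rw [NNReal.smul_def, Real.coe_toNNReal _ (hpos x), Complex.real_smul]
    rw [smul_eq_mul]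
    show fourier (-ν) x * hℂ x = (h x : ℂ) * g x
    rw [mul_comm, hg]
  -- Step 2 : Bessel's inequality
  set F := hmemℂ.toLp hℂ with hF
  have hFcoef : ∀ n : ℤ, @inner ℂ _ _ (fourierLp 2 n : Lp ℂ 2 (haarAddCircle : Measure Circ)) F
      = fourierCoeff hℂ n := by
    intro n
    have h1 := fourierBasis_repr F n
    have h2 : fourierBasis.repr F n
        = @inner ℂ _ _ ((fourierBasis : HilbertBasis ℤ ℂ _) n) F :=
      fourierBasis.repr_apply_apply F n
    have h3 : (fourierBasis : HilbertBasis ℤ ℂ _) n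
        = (fourierLp 2 n : Lp ℂ 2 (haarAddCircle : Measure Circ)) := by
      rw [← coe_fourierBasis]
    have h4 : fourierCoeff (F : Circ → ℂ) n = fourierCoeff hℂ n := by
      rw [fourierCoeff, fourierCoeff]
      refine integral_congr_ae ?_
      filter_upwards [hmemℂ.coeFn_toLp] with x hx
      rw [hx]
    rw [← h3, ← h2, h1, h4]
  -- each block contributes at least c/2
  have hblock : ∀ M : ℕ, (M : ℝ) * (c / 2) ≤ ‖F‖ ^ 2 := by
    intro M
    set U : Finset ℤ := (Finset.Icc 1 M).biUnion
      (fun k => (Finset.range (2 ^ ns k)).image (fun j => RRS.wnu rs ms k j)) with hU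
    have hbessel : ∑ i ∈ U, ‖@inner ℂ _ _
          (fourierLp 2 i : Lp ℂ 2 (haarAddCircle : Measure Circ)) F‖ ^ 2 ≤ ‖F‖ ^ 2 :=
      orthonormal_fourier.sum_inner_products_le F
    -- disjointness of the blocks
    have hdisj : (↑(Finset.Icc 1 M) : Set ℕ).PairwiseDisjoint
        (fun k => (Finset.range (2 ^ ns k)).image (fun j => RRS.wnu rs ms k j)) := by
      intro a ha b hb hab
      simp only [Finset.coe_Icc, Set.mem_Icc] at ha hb
      -- wlog via a helper
      have key : ∀ a b : ℕ, 1 ≤ a → a < b → ∀ x : ℤ,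
          x ∈ (Finset.range (2 ^ ns a)).image (fun j => RRS.wnu rs ms a j) →
          x ∈ (Finset.range (2 ^ ns b)).image (fun j => RRS.wnu rs ms b j) → False := by
        intro a b ha1 hab x hxa hxb
        obtain ⟨ja, hja, rfl⟩ := Finset.mem_image.mp hxa
        obtain ⟨jb, hjb, hjb'⟩ := Finset.mem_image.mp hxb
        rw [Finset.mem_range] at hja hjb
        have hb2 : 2 ≤ b := by omega
        have h1 : RRS.wnu rs ms a ja ≤ RRS.Lb rs ms ns a := by
          have := RRS.Dmem_abs rs ms ns (k := a) (x := RRS.wnu rs ms a ja) ⟨ja, hja, Or.inl rfl⟩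
          have hnn : (0:ℤ) ≤ RRS.wnu rs ms a ja := le_of_lt (RRS.wnu_pos rs ms hrpos a ja)
          rw [abs_of_nonneg hnn] at this
          exact this.2
        have h2 : RRS.Lb rs ms ns a ≤ RRS.Tb rs ms ns b := by
          rw [RRS.Tb]
          refine Finset.single_le_sum (f := fun i => RRS.Lb rs ms ns i)
            (fun i _ => RRS.Lb_nonneg rs ms ns i) ?_
          rw [Finset.mem_Icc]
          omega
        have h3 : (rs b : ℤ) ≤ RRS.wnu rs ms b jb := by
          have := RRS.Dmem_abs rs ms ns (k := b) (x := RRS.wnu rs ms b jb) ⟨jb, hjb, Or.inl rfl⟩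
          have hnn : (0:ℤ) ≤ RRS.wnu rs ms b jb := le_of_lt (RRS.wnu_pos rs ms hrpos b jb)
          rw [abs_of_nonneg hnn] at this
          exact this.1
        have h4 := hgr b hb2
        have h5 := RRS.Tb_nonneg rs ms ns b
        omega
      rw [Function.onFun, Finset.disjoint_left]
      intro x hxa hxb
      rcases lt_or_gt_of_ne hab with hlt | hgt
      · exact key a b ha.1 hlt x hxa hxb
      · exact key b a hb.1 hgt x hxb hxa
    rw [hU, Finset.sum_biUnion hdisj] at hbessel
    have hinner : ∀ k, 1 ≤ k →
        ∑ i ∈ (Finset.range (2 ^ ns k)).image (fun j => RRS.wnu rs ms k j),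
          ‖@inner ℂ _ _ (fourierLp 2 i : Lp ℂ 2 (haarAddCircle : Measure Circ)) F‖ ^ 2
          = (2 ^ ns k : ℝ) * εs k ^ 2 := by
      intro k hk
      rw [Finset.sum_image]
      · have : ∀ j ∈ Finset.range (2 ^ ns k),
            ‖@inner ℂ _ _ (fourierLp 2 (RRS.wnu rs ms k j) :
              Lp ℂ 2 (haarAddCircle : Measure Circ)) F‖ ^ 2 = εs k ^ 2 := by
          intro j hj
          rw [hFcoef, hcoeff k j hk (Finset.mem_range.mp hj)]
          rw [norm_neg, norm_mul]
          have hpc : ‖RRS.pc (ns k) j‖ = 1 := by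
            rcases RRS.pc_unit (ns k) (Finset.mem_range.mp hj) with hh | hh <;> simp [hh]
          rw [hpc, mul_one, Complex.norm_real, Real.norm_eq_abs,
            abs_of_pos (hεpos k)]
        rw [Finset.sum_congr rfl this, Finset.sum_const, Finset.card_range,
          nsmul_eq_mul]
        push_cast
        ring
      · intro j1 hj1 j2 hj2 he
        have hm : (0:ℤ) < ms k := by exact_mod_cast hmpos k
        simp only [RRS.wnu] at he
        have : (j1:ℤ) * ms k = (j2:ℤ) * ms k := by omega
        have := mul_right_cancel₀ (ne_of_gt hm) this
        exact_mod_cast this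
    have hterm : ∀ k ∈ Finset.Icc 1 M, c / 2 ≤
        ∑ i ∈ (Finset.range (2 ^ ns k)).image (fun j => RRS.wnu rs ms k j),
          ‖@inner ℂ _ _ (fourierLp 2 i : Lp ℂ 2 (haarAddCircle : Measure Circ)) F‖ ^ 2 := by
      intro k hkmem
      have hk1 : 1 ≤ k := (Finset.mem_Icc.mp hkmem).1
      rw [hinner k hk1]
      have hb := hcbig k hk1
      have h2 : (2:ℝ) ^ (ns k + 1) - 1 ≤ 2 * 2 ^ ns k := by
        rw [pow_succ]
        nlinarith [pow_pos (by norm_num : (0:ℝ) < 2) (ns k)]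
      nlinarith [sq_nonneg (εs k), pow_pos (by norm_num : (0:ℝ) < 2) (ns k)]
    have hsum : (M : ℝ) * (c / 2) ≤ ∑ k ∈ Finset.Icc 1 M,
        ∑ i ∈ (Finset.range (2 ^ ns k)).image (fun j => RRS.wnu rs ms k j),
          ‖@inner ℂ _ _ (fourierLp 2 i : Lp ℂ 2 (haarAddCircle : Measure Circ)) F‖ ^ 2 := by
      have := Finset.sum_le_sum hterm
      have hcard : (Finset.Icc 1 M).card = M := by
        rw [Nat.card_Icc]
        omega
      rw [Finset.sum_const, hcard, nsmul_eq_mul] at this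
      exact this
    linarith
  -- conclusion
  obtain ⟨M, hM⟩ := exists_nat_gt (‖F‖ ^ 2 / (c / 2))
  have hM2 : ‖F‖ ^ 2 < (M : ℝ) * (c / 2) := by
    rw [div_lt_iff₀ (by linarith)] at hM
    linarith
  linarith [hblock M]
end
end
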